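/- arXiv:1602.01023 — 4 statements merged into one kernel-verified Lean document; each statement's English description precedes it below -/
import Mathlib

section
/- For α > -1/2 and β > -1, |P_n^{(α,β)}(cos(1/n))| ≍ n^α as n → ∞; i.e., there exist positive constants C₁, C₂ and n₀ with C₁ n^α ≤ |P_n^{(α,β)}(cos(1/n))| ≤ C₂ n^α for all n ≥ n₀. -/
open Real Set

/-- Jacobi polynomial `P_n^{(a,b)}` in the standard normalization. -/
noncomputable def jacobiP (a b : ℝ) (n : ℕ) (x : ℝ) : ℝ :=
  (Nat.factorial n : ℝ)⁻¹ *
    ∑ k ∈ Finset.range (n + 1),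
      (Nat.choose n k : ℝ) * (ascPochhammer ℝ k).eval ((n : ℝ) + a + b + 1) *
        (ascPochhammer ℝ (n - k)).eval (a + (k : ℝ) + 1) * ((x - 1) / 2) ^ k

/-- Pochhammer symbol `(q)_n` for real `q`. -/
noncomputable def poch (q : ℝ) (n : ℕ) : ℝ := (ascPochhammer ℝ n).eval q

namespace JacobiAux

open Filter Topology

lemma poch_zero (q : ℝ) : poch q 0 = 1 := by simp [poch]

lemma poch_succ (q : ℝ) (k : ℕ) : poch q (k+1) = poch q k * (q + k) := by
  simp [poch, ascPochhammer_succ_right]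

lemma poch_pos {q : ℝ} (hq : 0 < q) (k : ℕ) : 0 < poch q k := by
  induction k with
  | zero => simp [poch_zero]
  | succ k ih => rw [poch_succ]; exact mul_pos ih (by positivity)

lemma poch_split {k n : ℕ} (h : k ≤ n) (q : ℝ) :
    poch q n = poch q k * poch (q + k) (n - k) := by
  have := congrArg (Polynomial.eval q) (ascPochhammer_mul (S := ℝ) k (n - k))
  rw [Nat.add_sub_cancel' h] at this
  simpa [poch, Polynomial.eval_comp] using this.symm

lemma poch_le_pow {q M : ℝ} (hq : 0 ≤ q) (hM : 0 ≤ M) :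
    ∀ k : ℕ, (∀ j : ℕ, j < k → q + j ≤ M) → poch q k ≤ M ^ k := by
  intro k
  induction k with
  | zero => intro _; simp [poch_zero]
  | succ k ih =>
    intro h
    rw [poch_succ, pow_succ]
    have h1 : poch q k ≤ M ^ k := ih fun j hj => h j (hj.trans (Nat.lt_succ_self k))
    have h2 : q + k ≤ M := h k (Nat.lt_succ_self k)
    have h3 : 0 ≤ q + (k : ℝ) := by positivity
    exact mul_le_mul h1 h2 h3 (by positivity)

lemma poch_ge {q : ℝ} (hq : 1/2 ≤ q) (k : ℕ) :
    ((2 * k).factorial : ℝ) / (4 ^ k * k.factorial) ≤ poch q k := by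
  induction k with
  | zero => simp [poch_zero]
  | succ k ih =>
    rw [poch_succ]
    have hfac : ((2 * (k + 1)).factorial : ℝ)
        = (2 * k + 2) * ((2 * k + 1) * (2 * k).factorial) := by
      have : 2 * (k + 1) = (2 * k + 1) + 1 := by ring
      rw [this, Nat.factorial_succ, Nat.factorial_succ]
      push_cast; ring
    have hfac2 : ((k + 1).factorial : ℝ) = (k + 1) * k.factorial := by
      rw [Nat.factorial_succ]; push_cast; ring
    have hpos : (0:ℝ) < (2 * k).factorial := by positivity
    have hkpos : (0:ℝ) < k.factorial := by positivity
    have hqk : (k : ℝ) + 1/2 ≤ q + k := by linarith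
    have hL : ((2 * (k + 1)).factorial : ℝ) / (4 ^ (k + 1) * (k + 1).factorial)
        = ((2 * k).factorial : ℝ) / (4 ^ k * k.factorial) * ((k : ℝ) + 1/2) := by
      rw [hfac, hfac2]
      field_simp
      ring
    rw [hL]
    have h0 : (0:ℝ) ≤ ((2 * k).factorial : ℝ) / (4 ^ k * k.factorial) := by positivity
    have h1 : (0:ℝ) ≤ (k : ℝ) + 1/2 := by positivity
    exact mul_le_mul ih hqk h1 (le_trans h0 ih)

lemma poch_eq_prod (q : ℝ) (k : ℕ) : poch q k = ∏ j ∈ Finset.range k, (q + j) := by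
  induction k with
  | zero => simp [poch_zero]
  | succ k ih => rw [poch_succ, Finset.prod_range_succ, ih]

/-- the normalized terms of the Jacobi sum -/
noncomputable def Bterm (a b : ℝ) (n k : ℕ) (t : ℝ) : ℝ :=
  (n.choose k : ℝ) * poch ((n : ℝ) + a + b + 1) k / poch (a + 1) k * t ^ k

lemma jacobiP_eq (a b : ℝ) (ha : 0 < a + 1) (n : ℕ) (x : ℝ) :
    jacobiP a b n x
      = poch (a + 1) n / (n.factorial : ℝ)
        * ∑ k ∈ Finset.range (n + 1), Bterm a b n k ((x - 1) / 2) := by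
  unfold jacobiP
  rw [Finset.mul_sum, Finset.mul_sum]
  refine Finset.sum_congr rfl fun k hk => ?_
  have hk' : k ≤ n := Nat.lt_succ_iff.mp (Finset.mem_range.mp hk)
  have harg : a + (k : ℝ) + 1 = a + 1 + k := by ring
  have hsplit := poch_split hk' (a + 1)
  have hP2 : poch (a + 1) k ≠ 0 := (poch_pos ha k).ne'
  have hF : ((n.factorial : ℝ)) ≠ 0 := Nat.cast_ne_zero.mpr n.factorial_ne_zero
  show (n.factorial : ℝ)⁻¹ * ((n.choose k : ℝ) * poch ((n : ℝ) + a + b + 1) k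
      * poch (a + (k : ℝ) + 1) (n - k) * ((x - 1) / 2) ^ k) = _
  rw [harg]
  unfold Bterm
  rw [hsplit]
  field_simp

lemma Bterm_zero (a b : ℝ) (n : ℕ) (t : ℝ) : Bterm a b n 0 t = 1 := by
  simp [Bterm, poch_zero]

lemma Bterm_one (a b : ℝ) (n : ℕ) (t : ℝ) :
    Bterm a b n 1 t = (n:ℝ) * ((n : ℝ) + a + b + 1) / (a + 1) * t := by
  have h : ∀ q : ℝ, poch q 1 = q := by
    intro q
    rw [show (1:ℕ) = 0 + 1 from rfl, poch_succ, poch_zero]; push_cast; ring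
  simp [Bterm, h]

lemma Bterm_one_bound (a b : ℝ) (ha : -(1/2:ℝ) < a) (n : ℕ)
    (hn : 10 * (|a| + |b| + 1) ≤ (n : ℝ)) (t : ℝ) (ht : |t| ≤ 1 / (4 * (n:ℝ)^2)) :
    |Bterm a b n 1 t| ≤ 11/20 := by
  have hab1 : (1:ℝ) ≤ |a| + |b| + 1 := by
    have := abs_nonneg a; have := abs_nonneg b; linarith
  have hn10 : (10:ℝ) ≤ (n:ℝ) := by nlinarith
  have hnpos : (0:ℝ) < n := by linarith
  have habs : -(|a| + |b| + 1) ≤ a + b + 1 := by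
    have := neg_abs_le a; have := neg_abs_le b; linarith
  have habs2 : a + b + 1 ≤ |a| + |b| + 1 := by
    have := le_abs_self a; have := le_abs_self b; linarith
  have hq : (0:ℝ) < (n:ℝ) + a + b + 1 := by nlinarith
  have ha1 : (1/2:ℝ) < a + 1 := by linarith
  rw [Bterm_one, abs_mul,
    abs_of_nonneg (by positivity : (0:ℝ) ≤ (n:ℝ) * ((n : ℝ) + a + b + 1) / (a + 1))]
  have h1 : (n:ℝ) + a + b + 1 ≤ 11/10 * n := by nlinarith
  calc (n:ℝ) * ((n : ℝ) + a + b + 1) / (a + 1) * |t|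
      ≤ (n:ℝ) * (11/10 * n) / (1/2) * (1 / (4 * (n:ℝ)^2)) := by
        gcongr
    _ = 11/20 := by field_simp; ring

lemma Bterm_bound (a b : ℝ) (ha : -(1/2:ℝ) < a) (n k : ℕ) (hk : k ≤ n)
    (hn : 10 * (|a| + |b| + 1) ≤ (n : ℝ)) (t : ℝ) (ht : |t| ≤ 1 / (4 * (n:ℝ)^2)) :
    |Bterm a b n k t| ≤ (21/10) ^ k / ((2 * k).factorial : ℝ) := by
  have hab1 : (1:ℝ) ≤ |a| + |b| + 1 := by
    have := abs_nonneg a; have := abs_nonneg b; linarith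
  have hn10 : (10:ℝ) ≤ (n:ℝ) := by nlinarith
  have hnpos : (0:ℝ) < n := by linarith
  have habs : -(|a| + |b| + 1) ≤ a + b + 1 := by
    have := neg_abs_le a; have := neg_abs_le b; linarith
  have habs2 : a + b + 1 ≤ |a| + |b| + 1 := by
    have := le_abs_self a; have := le_abs_self b; linarith
  have hq : (0:ℝ) < (n:ℝ) + a + b + 1 := by nlinarith
  have ha1 : (1/2:ℝ) ≤ a + 1 := by linarith
  have ha1' : (0:ℝ) < a + 1 := by linarith
  have hp1 : (0:ℝ) < poch ((n : ℝ) + a + b + 1) k := poch_pos hq k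
  have hp2 : (0:ℝ) < poch (a + 1) k := poch_pos ha1' k
  have hBabs : |Bterm a b n k t|
      = (n.choose k : ℝ) * poch ((n : ℝ) + a + b + 1) k / poch (a + 1) k * |t| ^ k := by
    unfold Bterm
    rw [abs_mul, abs_pow, abs_of_nonneg (by positivity)]
  rw [hBabs]
  have hC : (n.choose k : ℝ) ≤ (n:ℝ) ^ k / (k.factorial : ℝ) := by
    have := Nat.choose_le_pow_div (α := ℝ) k n
    simpa using this
  have hP1 : poch ((n : ℝ) + a + b + 1) k ≤ (21 / 10 * n) ^ k := by
    refine poch_le_pow hq.le (by positivity) k fun j hj => ?_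
    have hj' : (j : ℝ) ≤ (n:ℝ) - 1 := by
      have : (j:ℝ) + 1 ≤ n := by
        calc (j:ℝ) + 1 ≤ k := by exact_mod_cast hj
        _ ≤ n := by exact_mod_cast hk
      linarith
    linarith
  have hP2 : ((2 * k).factorial : ℝ) / (4 ^ k * k.factorial) ≤ poch (a + 1) k := poch_ge ha1 k
  have hd : (0:ℝ) < ((2 * k).factorial : ℝ) / (4 ^ k * k.factorial) := by positivity
  have htk : |t| ^ k ≤ (1 / (4 * (n:ℝ)^2)) ^ k := pow_le_pow_left₀ (abs_nonneg t) ht k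
  calc (n.choose k : ℝ) * poch ((n : ℝ) + a + b + 1) k / poch (a + 1) k * |t| ^ k
      ≤ ((n:ℝ) ^ k / (k.factorial : ℝ)) * (21 / 10 * n) ^ k
          / (((2 * k).factorial : ℝ) / (4 ^ k * k.factorial)) * (1 / (4 * (n:ℝ)^2)) ^ k := by
        gcongr
    _ = (21/10) ^ k / ((2 * k).factorial : ℝ) := by
        have h1 : ((2 * k).factorial : ℝ) ≠ 0 := by positivity
        have h2 : (k.factorial : ℝ) ≠ 0 := by positivity
        have h3 : (n:ℝ) ≠ 0 := hnpos.ne'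
        field_simp
        have hb : (n:ℝ) * (21 * n / 10) * 4 * (1 / (n ^ 2 * 4)) = 21 / 10 := by
          rw [mul_one_div, div_eq_iff (by positivity)]
          ring
        rw [← mul_pow, ← mul_pow, ← mul_pow, hb]

lemma tail_bound : ∀ k : ℕ, (21/10:ℝ) ^ (k+2) / ((2 * (k+2)).factorial : ℝ)
    ≤ (19/100) * (1/10) ^ k := by
  intro k
  induction k with
  | zero => norm_num [Nat.factorial]
  | succ k ih =>
    have he : (2 * (k + 1 + 2)) = (2 * (k + 2) + 1) + 1 := by ring
    have hfac : ((2 * (k + 1 + 2)).factorial : ℝ)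
        = (2 * (k:ℝ) + 6) * ((2 * k + 5) * ((2 * (k+2)).factorial : ℝ)) := by
      rw [he, Nat.factorial_succ, Nat.factorial_succ]
      push_cast; ring
    have hpos : (0:ℝ) < ((2 * (k+2)).factorial : ℝ) := by positivity
    have hstep : (21/10:ℝ) ^ (k+1+2) / ((2 * (k+1+2)).factorial : ℝ)
        = (21/10:ℝ) ^ (k+2) / ((2 * (k+2)).factorial : ℝ)
          * ((21/10) / ((2 * (k:ℝ) + 5) * (2 * k + 6))) := by
      rw [hfac, pow_succ]
      field_simp
    rw [hstep]
    have hr : (21/10:ℝ) / ((2 * (k:ℝ) + 5) * (2 * k + 6)) ≤ 1/10 := by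
      rw [div_le_iff₀ (by nlinarith [Nat.cast_nonneg (α := ℝ) k])]
      nlinarith [Nat.cast_nonneg (α := ℝ) k]
    have hL : (0:ℝ) ≤ (21/10:ℝ) ^ (k+2) / ((2 * (k+2)).factorial : ℝ) := by positivity
    calc (21/10:ℝ) ^ (k+2) / ((2 * (k+2)).factorial : ℝ)
          * ((21/10) / ((2 * (k:ℝ) + 5) * (2 * k + 6)))
        ≤ ((19/100) * (1/10) ^ k) * (1/10) :=
          mul_le_mul ih hr (by positivity) (by positivity)
      _ = (19/100) * (1/10) ^ (k+1) := by ring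

lemma sum_est (a b : ℝ) (ha : -(1/2:ℝ) < a) (n : ℕ) (hn1 : 1 ≤ n)
    (hn : 10 * (|a| + |b| + 1) ≤ (n : ℝ)) (t : ℝ) (ht : |t| ≤ 1 / (4 * (n:ℝ)^2)) :
    |∑ k ∈ Finset.range (n+1), Bterm a b n k t - 1| ≤ 4/5 := by
  obtain ⟨m, rfl⟩ : ∃ m, n = m + 1 := ⟨n - 1, (Nat.succ_pred_eq_of_pos hn1).symm⟩
  rw [Finset.sum_range_succ' _ (m+1),
    Finset.sum_range_succ' (fun i => Bterm a b (m+1) (i+1) t) m, Bterm_zero]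
  have key : ∀ k ∈ Finset.range m,
      |Bterm a b (m+1) (k+1+1) t| ≤ (19/100) * (1/10) ^ k := by
    intro k hk
    have hk' : k + 1 + 1 ≤ m + 1 := by
      have := Finset.mem_range.mp hk; omega
    have h1 := Bterm_bound a b ha (m+1) (k+2) (by omega) hn t ht
    have h2 := tail_bound k
    calc |Bterm a b (m+1) (k+1+1) t|
        = |Bterm a b (m+1) (k+2) t| := by norm_num
      _ ≤ (21/10) ^ (k+2) / ((2 * (k+2)).factorial : ℝ) := h1
      _ ≤ (19/100) * (1/10) ^ k := h2
  have hgeom : ∑ k ∈ Finset.range m, ((1:ℝ)/10) ^ k ≤ 10/9 := by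
    rw [geom_sum_eq (by norm_num : (1/10:ℝ) ≠ 1) m]
    have h0 : (0:ℝ) ≤ (1/10:ℝ) ^ m := by positivity
    rw [div_le_iff_of_neg (by norm_num : (1/10:ℝ) - 1 < 0)]
    nlinarith
  have hsum : |∑ k ∈ Finset.range m, Bterm a b (m+1) (k+1+1) t| ≤ 19/90 := by
    calc |∑ k ∈ Finset.range m, Bterm a b (m+1) (k+1+1) t|
        ≤ ∑ k ∈ Finset.range m, |Bterm a b (m+1) (k+1+1) t| :=
          Finset.abs_sum_le_sum_abs _ _
      _ ≤ ∑ k ∈ Finset.range m, (19/100) * ((1:ℝ)/10) ^ k := Finset.sum_le_sum key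
      _ = (19/100) * ∑ k ∈ Finset.range m, ((1:ℝ)/10) ^ k := by rw [← Finset.mul_sum]
      _ ≤ (19/100) * (10/9) := by gcongr
      _ = 19/90 := by norm_num
  have hB1 := Bterm_one_bound a b ha (m+1) hn t ht
  have habs : |(∑ k ∈ Finset.range m, Bterm a b (m+1) (k+1+1) t
      + Bterm a b (m+1) (0+1) t + 1) - 1|
      ≤ |∑ k ∈ Finset.range m, Bterm a b (m+1) (k+1+1) t| + |Bterm a b (m+1) 1 t| := by
    have : (∑ k ∈ Finset.range m, Bterm a b (m+1) (k+1+1) t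
        + Bterm a b (m+1) (0+1) t + 1) - 1
        = ∑ k ∈ Finset.range m, Bterm a b (m+1) (k+1+1) t + Bterm a b (m+1) 1 t := by
      norm_num
    rw [this]
    exact abs_add_le _ _
  calc |(∑ k ∈ Finset.range m, Bterm a b (m+1) (k+1+1) t
      + Bterm a b (m+1) (0+1) t + 1) - 1|
      ≤ |∑ k ∈ Finset.range m, Bterm a b (m+1) (k+1+1) t| + |Bterm a b (m+1) 1 t| := habs
    _ ≤ 19/90 + 11/20 := add_le_add hsum hB1
    _ ≤ 4/5 := by norm_num

lemma pref_tendsto (a : ℝ) (ha1 : 0 < a + 1) :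
    Filter.Tendsto (fun n : ℕ => poch (a+1) n / (n.factorial : ℝ) / (n:ℝ) ^ a) atTop
      (𝓝 (1 / Real.Gamma (a+1))) := by
  have hG : Real.Gamma (a+1) ≠ 0 := (Real.Gamma_pos_of_pos ha1).ne'
  have h1 : Filter.Tendsto (fun n : ℕ => (n:ℝ) / ((n:ℝ) + (a+1))) atTop (𝓝 1) :=
    tendsto_natCast_div_add_atTop (a+1)
  have h2 : Filter.Tendsto (fun n : ℕ => (Real.GammaSeq (a+1) n)⁻¹) atTop
      (𝓝 (Real.Gamma (a+1))⁻¹) := (Real.GammaSeq_tendsto_Gamma (a+1)).inv₀ hG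
  have h3 := h1.mul h2
  rw [one_mul] at h3
  rw [one_div]
  refine h3.congr' ?_
  filter_upwards [eventually_ge_atTop 1] with n hn
  have hn0 : (0:ℝ) < n := by exact_mod_cast hn
  have hprod : ∏ j ∈ Finset.range (n+1), ((a+1) + (j:ℝ)) = poch (a+1) n * ((a+1) + n) := by
    rw [Finset.prod_range_succ, ← poch_eq_prod]
  have hpoch : (0:ℝ) < poch (a+1) n := poch_pos ha1 n
  have hGS : Real.GammaSeq (a+1) n
      = (n:ℝ) ^ (a+1) * n.factorial / (poch (a+1) n * ((a+1) + n)) := by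
    rw [Real.GammaSeq, hprod]
  rw [hGS]
  have hrp : (n:ℝ) ^ (a+1) = (n:ℝ) ^ a * n := by
    rw [Real.rpow_add hn0, Real.rpow_one]
  have hna : (0:ℝ) < (n:ℝ) ^ a := Real.rpow_pos_of_pos hn0 a
  have hfp : (0:ℝ) < (n.factorial : ℝ) := by positivity
  have hq : (0:ℝ) < (a+1) + n := by positivity
  rw [hrp]
  field_simp
  ring

end JacobiAux

set_option maxHeartbeats 1000000 in
open JacobiAux Filter Topology in
theorem jacobiP_at_cos_inv_n (a b : ℝ) (ha : -(1 / 2 : ℝ) < a) (hb : -1 < b) :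
    ∃ C₁ C₂ : ℝ, 0 < C₁ ∧ 0 < C₂ ∧ ∃ n₀ : ℕ, ∀ n : ℕ, n₀ ≤ n →
      C₁ * (n : ℝ) ^ a ≤ |jacobiP a b n (Real.cos (1 / n))| ∧
      |jacobiP a b n (Real.cos (1 / n))| ≤ C₂ * (n : ℝ) ^ a := by
  have ha1 : (0:ℝ) < a + 1 := by linarith
  have hGpos : 0 < Real.Gamma (a+1) := Real.Gamma_pos_of_pos ha1
  set L : ℝ := 1 / Real.Gamma (a+1) with hLdef
  have hLpos : 0 < L := by positivity
  refine ⟨L/10, 4*L, by positivity, by positivity, ?_⟩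
  have hev1 : ∀ᶠ n : ℕ in atTop,
      poch (a+1) n / (n.factorial : ℝ) / (n:ℝ) ^ a ∈ Ioo (L/2) (2*L) :=
    (pref_tendsto a ha1).eventually
      (Ioo_mem_nhds (by linarith) (by linarith))
  have hev2 : ∀ᶠ n : ℕ in atTop, 10 * (|a| + |b| + 1) ≤ (n:ℝ) :=
    tendsto_natCast_atTop_atTop.eventually_ge_atTop _
  have hev3 : ∀ᶠ n : ℕ in atTop, 1 ≤ n := eventually_ge_atTop 1
  obtain ⟨n₀, hn₀⟩ := eventually_atTop.mp (hev1.and (hev2.and hev3))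
  refine ⟨n₀, fun n hn => ?_⟩
  obtain ⟨hF, hn10, hn1⟩ := hn₀ n hn
  obtain ⟨hF1, hF2⟩ := hF
  have hn0 : (0:ℝ) < n := by exact_mod_cast hn1
  have hna : (0:ℝ) < (n:ℝ) ^ a := Real.rpow_pos_of_pos hn0 a
  set t : ℝ := (Real.cos (1 / (n:ℝ)) - 1) / 2 with htdef
  have hc1 : Real.cos (1 / (n:ℝ)) ≤ 1 := Real.cos_le_one _
  have hc2 : 1 - (1 / (n:ℝ))^2 / 2 ≤ Real.cos (1 / (n:ℝ)) :=
    Real.one_sub_sq_div_two_le_cos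
  have hsq : (1 / (n:ℝ))^2 = 1 / (n:ℝ)^2 := by rw [div_pow, one_pow]
  have ht : |t| ≤ 1 / (4 * (n:ℝ)^2) := by
    rw [htdef, abs_of_nonpos (by linarith)]
    rw [hsq] at hc2
    have e : 1/(4*(n:ℝ)^2) = (1/(n:ℝ)^2)/4 := by ring
    linarith
  have hS := sum_est a b ha n hn1 hn10 t ht
  set S : ℝ := ∑ k ∈ Finset.range (n+1), Bterm a b n k t with hSdef
  obtain ⟨hSl, hSu⟩ := abs_le.mp hS
  have hS1 : (1/5 : ℝ) ≤ S := by linarith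
  have hS2 : S ≤ 9/5 := by linarith
  have hJ : jacobiP a b n (Real.cos (1 / (n:ℝ)))
      = poch (a + 1) n / (n.factorial : ℝ) * S := by
    rw [jacobiP_eq a b ha1 n (Real.cos (1 / (n:ℝ)))]
  set F : ℝ := poch (a + 1) n / (n.factorial : ℝ) with hFdef
  have hFpos : 0 < F := by
    have := poch_pos ha1 n
    have : (0:ℝ) < (n.factorial : ℝ) := by positivity
    exact div_pos (poch_pos ha1 n) this
  have habsJ : |jacobiP a b n (Real.cos (1 / (n:ℝ)))| = F * S := by
    rw [hJ, abs_of_nonneg (by nlinarith)]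
  have hFl : L/2 * (n:ℝ) ^ a ≤ F := ((lt_div_iff₀ hna).mp hF1).le
  have hFu : F ≤ 2*L * (n:ℝ) ^ a := ((div_lt_iff₀ hna).mp hF2).le
  rw [habsJ]
  have e1 : (0:ℝ) ≤ (F - L/2*(n:ℝ)^a) * S :=
    mul_nonneg (by linarith) (by linarith)
  have e2 : (0:ℝ) ≤ (L/2*(n:ℝ)^a) * (S - 1/5) := by
    apply mul_nonneg (by positivity) (by linarith)
  have e3 : (0:ℝ) ≤ (2*L*(n:ℝ)^a - F) * S :=
    mul_nonneg (by linarith) (by linarith)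
  have e4 : (0:ℝ) ≤ 2*L*(n:ℝ)^a*(9/5 - S) := by
    apply mul_nonneg (by positivity) (by linarith)
  have e5 : (0:ℝ) ≤ L*(n:ℝ)^a := by positivity
  constructor
  · nlinarith [e1, e2]
  · nlinarith [e3, e4, e5]
end

section
/- Let λ > -1/2 and μ > 0, and define the even orthonormal generalized Gegenbauer polynomial C̃_{2n}^{(λ,μ)}(t) = ã_{2n}^{(λ,μ)} P_n^{(λ-1/2, μ-1/2)}(2t² - 1) with ã_{2n}^{(λ,μ)} = ((2n+λ+μ) Γ(n+1) Γ(n+λ+μ) / (Γ(n+λ+1/2) Γ(n+μ+1/2)))^{1/2}. Then max_{t ∈ [-1,1]} |C̃_{2n}^{(λ,μ)}(t)| ≍ n^{max(λ,μ)} as n → ∞. -/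
open Real Set Finset

/-- Normalization constant for even orthonormal generalized Gegenbauer polynomials. -/
noncomputable def atilde2n (l m : ℝ) (n : ℕ) : ℝ :=
  (((2 * n + l + m) * Real.Gamma (n + 1) * Real.Gamma (n + l + m)) /
    (Real.Gamma (n + l + 1 / 2) * Real.Gamma (n + m + 1 / 2))) ^ ((1 : ℝ) / 2)

lemma poch_zero (q : ℝ) : poch q 0 = 1 := by simp [poch]

lemma poch_succ_right (q : ℝ) (n : ℕ) : poch q (n+1) = poch q n * (q + n) := by
  simp [poch, ascPochhammer_succ_eval]

lemma poch_succ_left (q : ℝ) (n : ℕ) : poch q (n+1) = q * poch (q+1) n := by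
  simp [poch, ascPochhammer_succ_left, Polynomial.eval_comp]

lemma poch_pos {q : ℝ} (hq : 0 < q) (n : ℕ) : 0 < poch q n := by
  induction n with
  | zero => simp [poch_zero]
  | succ k ih => rw [poch_succ_right]; positivity

lemma poch_neg_cast (b : ℝ) (n : ℕ) : poch (-((n:ℝ) + b)) n = (-1)^n * poch (b+1) n := by
  induction n generalizing b with
  | zero => simp [poch_zero]
  | succ k ih =>
    rw [poch_succ_left]
    have h1 : -(((k+1:ℕ):ℝ) + b) + 1 = -((k:ℝ) + b) := by push_cast; ring
    rw [h1, ih b, poch_succ_right]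
    push_cast; ring

lemma Gamma_poch {q : ℝ} (hq : 0 < q) (n : ℕ) :
    Real.Gamma (q + n) = poch q n * Real.Gamma q := by
  induction n with
  | zero => simp [poch_zero]
  | succ k ih =>
    have h : q + ((k:ℝ)+1) = (q + k) + 1 := by ring
    rw [Nat.cast_add, Nat.cast_one, h, Real.Gamma_add_one (by positivity), ih, poch_succ_right]
    ring

lemma vandermonde : ∀ (n : ℕ) (p r : ℝ),
    ∑ k ∈ Finset.range (n+1), ((-1:ℝ)^k * (n.choose k) * poch p k * poch (r+k) (n-k))
      = poch (r-p) n := by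
  intro n
  induction n with
  | zero => intro p r; simp [poch_zero]
  | succ n ih =>
    intro p r
    set f : ℕ → ℝ := fun k => (-1:ℝ)^k * ((n+1).choose k) * poch p k * poch (r+k) (n+1-k)
      with hf
    set g : ℕ → ℝ := fun j => (-1:ℝ)^j * (n.choose j) * poch p j * poch (r+j) (n+1-j)
      with hg
    have e1 : ∑ k ∈ Finset.range (n+2), f k
        = (∑ k ∈ Finset.range (n+1), f (k+1)) + f 0 := Finset.sum_range_succ' f (n+1)
    have e2 : ∀ k ∈ Finset.range (n+1), f (k+1)
        = (-p) * ((-1:ℝ)^k * (n.choose k) * poch (p+1) k * poch ((r+1)+k) (n-k)) + g (k+1) := by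
      intro k hk
      simp only [hf, hg]
      rw [Nat.choose_succ_succ, Nat.succ_sub_succ, poch_succ_left p k]
      have hb : r + ((k+1:ℕ):ℝ) = (r+1) + (k:ℝ) := by push_cast; ring
      rw [hb]
      push_cast; ring
    have e3 : ∑ k ∈ Finset.range (n+1), f (k+1)
        = (-p) * poch ((r+1)-(p+1)) n + ∑ k ∈ Finset.range (n+1), g (k+1) := by
      rw [Finset.sum_congr rfl e2, Finset.sum_add_distrib, ← Finset.mul_sum, ih (p+1) (r+1)]
    have e4 : ∑ k ∈ Finset.range (n+1), g (k+1)
        = (∑ j ∈ Finset.range (n+1), g j) + g (n+1) - g 0 := by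
      have := Finset.sum_range_succ' g (n+1)
      have h2 := Finset.sum_range_succ g (n+1)
      rw [h2] at this
      linarith [this]
    have e5 : g (n+1) = 0 := by simp [hg, Nat.choose_succ_self]
    have e6 : ∑ j ∈ Finset.range (n+1), g j
        = (r+n) * ∑ j ∈ Finset.range (n+1),
            ((-1:ℝ)^j * (n.choose j) * poch p j * poch (r+j) (n-j)) := by
      rw [Finset.mul_sum]
      refine Finset.sum_congr rfl ?_
      intro j hj
      have hjn : j ≤ n := Nat.lt_succ_iff.mp (Finset.mem_range.mp hj)
      have h1 : n + 1 - j = (n - j) + 1 := by omega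
      simp only [hg]
      rw [h1, poch_succ_right]
      have h2 : (r + (j:ℝ)) + ((n-j:ℕ):ℝ) = r + n := by
        rw [Nat.cast_sub hjn]; ring
      rw [h2]; ring
    have e7 : f 0 = g 0 := by simp [hf, hg]
    have hrp : (r+1) - (p+1) = r - p := by ring
    calc ∑ k ∈ Finset.range (n+1+1), f k
        = (-p) * poch (r-p) n + ((r+n) * poch (r-p) n + 0 - g 0) + g 0 := by
          rw [e1, e3, e4, e5, e6, ih p r, e7, hrp]
      _ = poch (r-p) n * ((r-p) + n) := by ring
      _ = poch (r-p) (n+1) := (poch_succ_right _ _).symm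

noncomputable def jc (a b : ℝ) (n k : ℕ) : ℝ :=
  (n.choose k : ℝ) * poch ((n:ℝ)+a+b+1) k * poch (a+(k:ℝ)+1) (n-k)

lemma jacobiP_eq (a b : ℝ) (n : ℕ) (x : ℝ) :
    jacobiP a b n x = (n.factorial:ℝ)⁻¹ *
      ∑ k ∈ Finset.range (n+1), jc a b n k * ((x-1)/2)^k := by
  unfold jacobiP jc poch
  congr 1

lemma jc_rec (a b : ℝ) (n k : ℕ) (hk : k < n) :
    ((k:ℝ)+1) * (a+(k:ℝ)+1) * jc a b n (k+1)
      = ((n-k:ℕ):ℝ) * ((n:ℝ)+(k:ℝ)+a+b+1) * jc a b n k := by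
  unfold jc
  obtain ⟨j, hj⟩ : ∃ j, n - k = j + 1 := ⟨n-k-1, by omega⟩
  have h1 : n - (k+1) = j := by omega
  have h3 : a + ((k+1:ℕ):ℝ) + 1 = (a+(k:ℝ)+1) + 1 := by push_cast; ring
  have h4 : (((n:ℕ).choose (k+1)):ℝ) * ((k:ℝ)+1) = ((n.choose k):ℝ) * ((j:ℝ)+1) := by
    have := Nat.choose_succ_right_eq n k
    rw [hj] at this
    exact_mod_cast congrArg (Nat.cast : ℕ → ℝ) this
  rw [h1, h3, poch_succ_right, hj, poch_succ_left]
  push_cast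
  linear_combination ((a+(k:ℝ)+1) * ((n:ℝ)+a+b+1+(k:ℝ)) * poch ((n:ℝ)+a+b+1) k *
    poch (a+(k:ℝ)+1+1) j) * h4

noncomputable def jacD1 (a b : ℝ) (n : ℕ) (x : ℝ) : ℝ :=
  (n.factorial:ℝ)⁻¹ * ∑ k ∈ Finset.range (n+1),
    jc a b n k * ((k:ℝ) * ((x-1)/2)^(k-1) * (1/2))

noncomputable def jacD2 (a b : ℝ) (n : ℕ) (x : ℝ) : ℝ :=
  (n.factorial:ℝ)⁻¹ * ∑ k ∈ Finset.range (n+1),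
    jc a b n k * ((k:ℝ) * (((k-1:ℕ):ℝ) * ((x-1)/2)^(k-1-1) * (1/2)) * (1/2))

lemma hasDerivAt_half (x : ℝ) : HasDerivAt (fun x:ℝ => (x-1)/2) (1/2) x := by
  simpa using ((hasDerivAt_id x).sub_const 1).div_const 2

lemma hasDerivAt_jacobiP (a b : ℝ) (n : ℕ) (x : ℝ) :
    HasDerivAt (fun x => jacobiP a b n x) (jacD1 a b n x) x := by
  simp only [jacobiP_eq]
  unfold jacD1
  exact (HasDerivAt.fun_sum (fun k _ => ((hasDerivAt_half x).pow k).const_mul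
    (jc a b n k))).const_mul _

lemma hasDerivAt_jacD1 (a b : ℝ) (n : ℕ) (x : ℝ) :
    HasDerivAt (fun x => jacD1 a b n x) (jacD2 a b n x) x := by
  unfold jacD1 jacD2
  refine (HasDerivAt.fun_sum (fun k _ => ?_)).const_mul _
  exact ((((hasDerivAt_half x).pow (k-1)).const_mul (k:ℝ)).mul_const (1/2)).const_mul
    (jc a b n k)

lemma sum_ode (a b : ℝ) (n : ℕ) (u : ℝ) :
    ∑ k ∈ Finset.range (n+1),
      ((1-(2*u+1)^2) * (jc a b n k * ((k:ℝ) * (((k-1:ℕ):ℝ) * u^(k-1-1) * (1/2)) * (1/2)))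
        + (b - a - (a+b+2)*(2*u+1)) * (jc a b n k * ((k:ℝ) * u^(k-1) * (1/2)))
        + ((n:ℝ)*((n:ℝ)+a+b+1)) * (jc a b n k * u^k)) = 0 := by
  have hterm : ∀ k ∈ Finset.range (n+1),
      ((1-(2*u+1)^2) * (jc a b n k * ((k:ℝ) * (((k-1:ℕ):ℝ) * u^(k-1-1) * (1/2)) * (1/2)))
        + (b - a - (a+b+2)*(2*u+1)) * (jc a b n k * ((k:ℝ) * u^(k-1) * (1/2)))
        + ((n:ℝ)*((n:ℝ)+a+b+1)) * (jc a b n k * u^k))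
      = ((n:ℝ)*((n:ℝ)+a+b+1) - (k:ℝ)*((k:ℝ)-1) - (a+b+2)*(k:ℝ)) * jc a b n k * u^k
        - ((k:ℝ)*((k:ℝ)-1) + (a+1)*(k:ℝ)) * jc a b n k * u^(k-1) := by
    intro k _
    rcases k with _|_|j
    · push_cast; ring
    · push_cast; ring
    · simp only [Nat.add_sub_cancel]
      push_cast
      ring
  rw [Finset.sum_congr rfl hterm, Finset.sum_sub_distrib]
  rw [Finset.sum_range_succ, Finset.sum_range_succ']
  have hP1n : ((n:ℝ)*((n:ℝ)+a+b+1) - (n:ℝ)*((n:ℝ)-1) - (a+b+2)*(n:ℝ)) * jc a b n n * u^n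
      = 0 := by
    have h : ((n:ℝ)*((n:ℝ)+a+b+1) - (n:ℝ)*((n:ℝ)-1) - (a+b+2)*(n:ℝ)) = 0 := by ring
    rw [h]; ring
  rw [hP1n]
  have hsum : ∀ k ∈ Finset.range n,
      ((n:ℝ)*((n:ℝ)+a+b+1) - (k:ℝ)*((k:ℝ)-1) - (a+b+2)*(k:ℝ)) * jc a b n k * u^k
      = (((k+1:ℕ):ℝ)*(((k+1:ℕ):ℝ)-1) + (a+1)*((k+1:ℕ):ℝ)) * jc a b n (k+1) * u^((k+1)-1) := by
    intro k hk
    have hkn : k < n := Finset.mem_range.mp hk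
    have hr := jc_rec a b n k hkn
    rw [Nat.cast_sub hkn.le] at hr
    have e1 : (k+1)-1 = k := rfl
    rw [e1]
    push_cast
    linear_combination (-(u^k)) * hr
  have h0 : (((0:ℕ):ℝ)*(((0:ℕ):ℝ)-1) + (a+1)*((0:ℕ):ℝ)) * jc a b n 0 * u^((0:ℕ)-1) = 0 := by
    norm_num
  rw [h0]
  have : (∑ k ∈ Finset.range n,
      ((n:ℝ)*((n:ℝ)+a+b+1) - (k:ℝ)*((k:ℝ)-1) - (a+b+2)*(k:ℝ)) * jc a b n k * u^k)
      = ∑ k ∈ Finset.range n,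
      (((k+1:ℕ):ℝ)*(((k+1:ℕ):ℝ)-1) + (a+1)*((k+1:ℕ):ℝ)) * jc a b n (k+1) * u^((k+1)-1) :=
    Finset.sum_congr rfl hsum
  rw [this]
  ring


lemma jacobi_ode (a b : ℝ) (n : ℕ) (x : ℝ) :
    (1 - x^2) * jacD2 a b n x + (b - a - (a+b+2)*x) * jacD1 a b n x
      + ((n:ℝ)*((n:ℝ)+a+b+1)) * jacobiP a b n x = 0 := by
  rw [jacobiP_eq]
  unfold jacD1 jacD2
  have key := sum_ode a b n ((x-1)/2)
  rw [show 2*((x-1)/2)+1 = x from by ring] at key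
  rw [Finset.sum_add_distrib, Finset.sum_add_distrib, ← Finset.mul_sum, ← Finset.mul_sum,
    ← Finset.mul_sum] at key
  linear_combination ((n.factorial:ℝ))⁻¹ * key

lemma jacobi_max (a b : ℝ) (hb : -(1/2:ℝ) < b) (n : ℕ)
    (hN : 0 < (n:ℝ)*((n:ℝ)+a+b+1)) :
    ∀ x ∈ Icc (-1:ℝ) 1, |jacobiP a b n x| ≤ max |jacobiP a b n (-1)| |jacobiP a b n 1| := by
  set N := (n:ℝ)*((n:ℝ)+a+b+1) with hNdef
  set g : ℝ → ℝ := fun x => N * (jacobiP a b n x)^2 + (1-x^2) * (jacD1 a b n x)^2 with hgdef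
  have hg : ∀ x, HasDerivAt g (2 * (jacD1 a b n x)^2 * ((a-b) + (a+b+1)*x)) x := by
    intro x
    have hy := hasDerivAt_jacobiP a b n x
    have hy1 := hasDerivAt_jacD1 a b n x
    have hA := (hy.pow 2).const_mul N
    have hB : HasDerivAt (fun x : ℝ => 1 - x^2) (-(2*x^(2-1))) x :=
      (hasDerivAt_pow 2 x).const_sub 1
    have hC := hy1.pow 2
    have h := hA.add (hB.mul hC)
    refine h.congr_deriv ?_
    simp only [Pi.pow_apply, Nat.cast_ofNat]
    have hode := jacobi_ode a b n x
    linear_combination (2 * jacD1 a b n x) * hode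
  have hgd : Differentiable ℝ g := fun x => (hg x).differentiableAt
  have hgc : Continuous g := hgd.continuous
  have hderiv : ∀ x : ℝ, deriv g x = 2 * (jacD1 a b n x)^2 * ((a-b) + (a+b+1)*x) :=
    fun x => (hg x).deriv
  have key : ∀ x ∈ Icc (-1:ℝ) 1, g x ≤ max (g (-1)) (g 1) := by
    have hφm1 : (a-b) + (a+b+1)*(-1) < 0 := by linarith
    by_cases hφ1 : (a-b) + (a+b+1)*1 ≤ 0
    · intro x hx
      have hanti : AntitoneOn g (Icc (-1:ℝ) 1) := by
        refine antitoneOn_of_deriv_nonpos (convex_Icc _ _) hgc.continuousOn hgd.differentiableOn ?_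
        intro z hz
        rw [interior_Icc] at hz
        rw [hderiv]
        have h1 : (a-b) + (a+b+1)*z ≤ 0 := by nlinarith [hz.1, hz.2, sq_nonneg (z+1), sq_nonneg (1-z)]
        nlinarith [sq_nonneg (jacD1 a b n z)]
      have := hanti (by constructor <;> norm_num) hx hx.1
      exact le_max_of_le_left this
    · push_neg at hφ1
      have hslope : 0 < a+b+1 := by linarith
      set x₀ : ℝ := (b-a)/(a+b+1) with hx₀
      have hx₀m : -1 < x₀ := by
        rw [hx₀, lt_div_iff₀ hslope]; linarith
      have hx₀p : x₀ < 1 := by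
        rw [hx₀, div_lt_iff₀ hslope]; linarith
      have hφx₀ : (a-b) + (a+b+1)*x₀ = 0 := by
        rw [hx₀]; field_simp; ring
      intro x hx
      rcases le_total x x₀ with hc | hc
      · have hanti : AntitoneOn g (Icc (-1:ℝ) x₀) := by
          refine antitoneOn_of_deriv_nonpos (convex_Icc _ _) hgc.continuousOn hgd.differentiableOn ?_
          intro z hz
          rw [interior_Icc] at hz
          rw [hderiv]
          have h1 : (a-b) + (a+b+1)*z ≤ 0 := by nlinarith [hz.2]
          nlinarith [sq_nonneg (jacD1 a b n z)]
        have := hanti (by constructor <;> [norm_num; linarith]) ⟨hx.1, hc⟩ hx.1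
        exact le_max_of_le_left this
      · have hmono : MonotoneOn g (Icc x₀ (1:ℝ)) := by
          refine monotoneOn_of_deriv_nonneg (convex_Icc _ _) hgc.continuousOn hgd.differentiableOn ?_
          intro z hz
          rw [interior_Icc] at hz
          rw [hderiv]
          have h1 : 0 ≤ (a-b) + (a+b+1)*z := by nlinarith [hz.1]
          nlinarith [sq_nonneg (jacD1 a b n z)]
        have := hmono ⟨hc, hx.2⟩ (by constructor <;> [linarith; norm_num]) hx.2
        exact le_max_of_le_right this
  intro x hx
  have h1 : N * (jacobiP a b n x)^2 ≤ g x := by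
    have h2 : 0 ≤ (1-x^2) * (jacD1 a b n x)^2 := by
      apply mul_nonneg
      · nlinarith [hx.1, hx.2]
      · positivity
    simp only [hgdef]; linarith
  have h3 := key x hx
  have hgm1 : g (-1) = N * (jacobiP a b n (-1))^2 := by norm_num [hgdef]
  have hg1 : g 1 = N * (jacobiP a b n 1)^2 := by simp [hgdef]
  set M : ℝ := max |jacobiP a b n (-1)| |jacobiP a b n 1| with hM
  have hM0 : 0 ≤ M := le_trans (abs_nonneg _) (le_max_left _ _)
  have hMsq : max (g (-1)) (g 1) ≤ N * M^2 := by
    rw [hgm1, hg1]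
    apply max_le
    · apply mul_le_mul_of_nonneg_left _ hN.le
      rw [← sq_abs]
      apply pow_le_pow_left₀ (abs_nonneg _) (le_max_left _ _)
    · apply mul_le_mul_of_nonneg_left _ hN.le
      rw [← sq_abs]
      apply pow_le_pow_left₀ (abs_nonneg _) (le_max_right _ _)
  have h4 : (jacobiP a b n x)^2 ≤ M^2 := by
    have := le_trans h1 (le_trans h3 hMsq)
    nlinarith
  calc |jacobiP a b n x| = Real.sqrt ((jacobiP a b n x)^2) := (Real.sqrt_sq_eq_abs _).symm
    _ ≤ Real.sqrt (M^2) := Real.sqrt_le_sqrt h4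
    _ = M := Real.sqrt_sq hM0


lemma jacobiP_one (a b : ℝ) (n : ℕ) :
    jacobiP a b n 1 = poch (a+1) n / n.factorial := by
  rw [jacobiP_eq]
  have h : ∑ k ∈ Finset.range (n+1), jc a b n k * ((1-1)/2)^k = jc a b n 0 := by
    rw [Finset.sum_eq_single_of_mem 0 (Finset.mem_range.mpr (Nat.succ_pos n))]
    · norm_num
    · intro k _ hk
      have : ((1:ℝ)-1)/2 = 0 := by norm_num
      rw [this, zero_pow hk, mul_zero]
  rw [h]
  have : jc a b n 0 = poch (a+1) n := by
    simp [jc, poch_zero]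
  rw [this]
  ring

lemma jacobiP_neg_one (a b : ℝ) (n : ℕ) :
    jacobiP a b n (-1) = (-1)^n * poch (b+1) n / n.factorial := by
  rw [jacobiP_eq]
  have h0 : ((-1:ℝ)-1)/2 = -1 := by norm_num
  have h : ∑ k ∈ Finset.range (n+1), jc a b n k * (((-1:ℝ)-1)/2)^k
      = ∑ k ∈ Finset.range (n+1),
        ((-1:ℝ)^k * (n.choose k) * poch ((n:ℝ)+a+b+1) k * poch ((a+1)+(k:ℝ)) (n-k)) := by
    refine Finset.sum_congr rfl fun k _ => ?_
    rw [h0]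
    unfold jc
    have : a + (k:ℝ) + 1 = (a+1) + (k:ℝ) := by ring
    rw [this]
    ring
  rw [h, vandermonde n ((n:ℝ)+a+b+1) (a+1)]
  have : (a+1) - ((n:ℝ)+a+b+1) = -((n:ℝ)+b) := by ring
  rw [this, poch_neg_cast]
  ring

/-- Two-sided Gamma ratio bound predicate. -/
def GR (c : ℝ) : Prop := ∃ K₁ K₂ X₀ : ℝ, 0 < K₁ ∧ 0 < K₂ ∧ 1 ≤ X₀ ∧ ∀ x : ℝ, X₀ ≤ x →
  K₁ * x ^ c * Real.Gamma x ≤ Real.Gamma (x + c) ∧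
  Real.Gamma (x + c) ≤ K₂ * x ^ c * Real.Gamma x

lemma gr_base {s : ℝ} (h0 : 0 ≤ s) (h1 : s ≤ 1) : GR s := by
  refine ⟨1/2, 1, 1, by norm_num, by norm_num, le_refl _, fun x hx => ?_⟩
  have hx0 : (0:ℝ) < x := lt_of_lt_of_le one_pos hx
  have hxs : (0:ℝ) < x + s := by linarith
  have hx1 : (0:ℝ) < x + 1 := by linarith
  have hΓx := Real.Gamma_pos_of_pos hx0
  have hΓxs := Real.Gamma_pos_of_pos hxs
  have hΓx1 := Real.Gamma_pos_of_pos hx1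
  have hcvx := Real.convexOn_log_Gamma.2
  constructor
  · -- lower bound
    have key := Real.convexOn_log_Gamma.2 (mem_Ioi.mpr hxs)
      (mem_Ioi.mpr (by linarith : (0:ℝ) < x + s + 1)) h0 (by linarith : (0:ℝ) ≤ 1 - s)
      (by ring)
    simp only [smul_eq_mul, Function.comp_apply] at key
    have harg : s * (x + s) + (1 - s) * (x + s + 1) = x + 1 := by ring
    rw [harg] at key
    -- key : log Γ (x+1) ≤ s * log Γ (x+s) + (1-s) * log Γ (x+s+1)
    have e1 : Real.Gamma (x+1) = x * Real.Gamma x := Real.Gamma_add_one hx0.ne'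
    have e2 : Real.Gamma (x+s+1) = (x+s) * Real.Gamma (x+s) := Real.Gamma_add_one hxs.ne'
    have hexp := Real.exp_le_exp.mpr key
    rw [Real.exp_log (by positivity : (0:ℝ) < Real.Gamma (x+1))] at hexp
    have hrhs : Real.exp (s * Real.log (Real.Gamma (x+s)) + (1-s) * Real.log (Real.Gamma (x+s+1)))
        = Real.Gamma (x+s) ^ s * Real.Gamma (x+s+1) ^ (1-s) := by
      rw [Real.exp_add]
      congr 1
      · rw [Real.rpow_def_of_pos hΓxs]; ring_nf
      · rw [Real.rpow_def_of_pos (by positivity : (0:ℝ) < Real.Gamma (x+s+1))]; ring_nf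
    rw [hrhs, e1, e2] at hexp
    -- hexp : x * Γ x ≤ Γ(x+s)^s * ((x+s) * Γ(x+s))^(1-s)
    have hsplit : Real.Gamma (x+s) ^ s * ((x+s) * Real.Gamma (x+s)) ^ (1-s)
        = Real.Gamma (x+s) * (x+s) ^ (1-s) := by
      rw [Real.mul_rpow hxs.le hΓxs.le]
      rw [show Real.Gamma (x+s) ^ s * ((x+s) ^ (1-s) * Real.Gamma (x+s) ^ (1-s))
          = (Real.Gamma (x+s) ^ s * Real.Gamma (x+s) ^ (1-s)) * (x+s) ^ (1-s) from by ring]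
      rw [← Real.rpow_add hΓxs]
      norm_num
    rw [hsplit] at hexp
    -- hexp : x * Γ x ≤ Γ(x+s) * (x+s)^(1-s)
    have hb1 : (x+s) ^ (1-s) ≤ 2 * x ^ (1-s) := by
      calc (x+s) ^ (1-s) ≤ (2*x) ^ (1-s) := by
            apply Real.rpow_le_rpow hxs.le (by linarith) (by linarith)
        _ = 2 ^ (1-s) * x ^ (1-s) := Real.mul_rpow (by norm_num) hx0.le
        _ ≤ 2 * x ^ (1-s) := by
            have : (2:ℝ) ^ (1-s) ≤ 2 ^ (1:ℝ) :=
              Real.rpow_le_rpow_of_exponent_le (by norm_num) (by linarith)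
            rw [Real.rpow_one] at this
            have : 0 ≤ x ^ (1-s) := Real.rpow_nonneg hx0.le _
            nlinarith [Real.rpow_le_rpow_of_exponent_le (show (1:ℝ) ≤ 2 by norm_num)
              (show 1-s ≤ (1:ℝ) by linarith), Real.rpow_one (2:ℝ)]
    have h2 : x * Real.Gamma x ≤ Real.Gamma (x+s) * (2 * x ^ (1-s)) := by
      calc x * Real.Gamma x ≤ Real.Gamma (x+s) * (x+s)^(1-s) := hexp
        _ ≤ Real.Gamma (x+s) * (2 * x ^ (1-s)) := by
            apply mul_le_mul_of_nonneg_left hb1 hΓxs.le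
    have hxpow : x * Real.Gamma x = x ^ s * x ^ (1-s) * Real.Gamma x := by
      rw [← Real.rpow_add hx0]
      norm_num
    rw [hxpow] at h2
    have hxp : (0:ℝ) < x ^ (1-s) := Real.rpow_pos_of_pos hx0 _
    nlinarith [Real.rpow_pos_of_pos hx0 s]
  · -- upper bound
    have key := Real.convexOn_log_Gamma.2 (mem_Ioi.mpr hx0) (mem_Ioi.mpr hx1)
      (by linarith : (0:ℝ) ≤ 1 - s) h0 (by ring)
    simp only [smul_eq_mul, Function.comp_apply] at key
    have harg : (1-s) * x + s * (x + 1) = x + s := by ring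
    rw [harg] at key
    have hexp := Real.exp_le_exp.mpr key
    rw [Real.exp_log hΓxs] at hexp
    have hrhs : Real.exp ((1-s) * Real.log (Real.Gamma x) + s * Real.log (Real.Gamma (x+1)))
        = Real.Gamma x ^ (1-s) * Real.Gamma (x+1) ^ s := by
      rw [Real.exp_add]
      congr 1
      · rw [Real.rpow_def_of_pos hΓx]; ring_nf
      · rw [Real.rpow_def_of_pos hΓx1]; ring_nf
    rw [hrhs, Real.Gamma_add_one hx0.ne'] at hexp
    have hsplit : Real.Gamma x ^ (1-s) * (x * Real.Gamma x) ^ s = x ^ s * Real.Gamma x := by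
      rw [Real.mul_rpow hx0.le hΓx.le]
      rw [show Real.Gamma x ^ (1-s) * (x ^ s * Real.Gamma x ^ s)
          = (Real.Gamma x ^ (1-s) * Real.Gamma x ^ s) * x ^ s from by ring]
      rw [← Real.rpow_add hΓx]
      norm_num
      ring
    rw [hsplit] at hexp
    linarith [hexp]



lemma gr_up {c : ℝ} (h : GR c) : GR (c+1) := by
  obtain ⟨K₁, K₂, X₀, hK₁, hK₂, hX₀, hb⟩ := h
  refine ⟨K₁/2, 2*K₂, max X₀ (2*|c|+2), by positivity, by positivity,
    le_trans hX₀ (le_max_left _ _), fun x hx => ?_⟩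
  have hxX := le_trans (le_max_left _ _) hx
  have hxc := le_trans (le_max_right _ _) hx
  have hx0 : (0:ℝ) < x := by
    have := abs_nonneg c; linarith
  have hcx : |c| ≤ x/2 := by linarith
  have hc1 : -(x/2) ≤ c := by have := neg_abs_le c; linarith
  have hc2 : c ≤ x/2 := by have := le_abs_self c; linarith
  have hxc0 : (0:ℝ) < x + c := by linarith
  have harg : x + (c+1) = (x+c) + 1 := by ring
  have hΓ : Real.Gamma (x + (c+1)) = (x+c) * Real.Gamma (x+c) := by
    rw [harg, Real.Gamma_add_one hxc0.ne']
  obtain ⟨hlo, hhi⟩ := hb x hxX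
  have hpow : x ^ (c+1) = x ^ c * x := by
    rw [Real.rpow_add hx0, Real.rpow_one]
  have hΓx := Real.Gamma_pos_of_pos hx0
  have hxpc : (0:ℝ) < x ^ c := Real.rpow_pos_of_pos hx0 _
  constructor
  · rw [hΓ, hpow]
    have h1 : x/2 ≤ x + c := by linarith
    nlinarith [mul_le_mul_of_nonneg_left hlo (by linarith : (0:ℝ) ≤ x/2),
      mul_le_mul_of_nonneg_right h1 (le_of_lt (mul_pos (mul_pos hK₁ hxpc) hΓx))]
  · rw [hΓ, hpow]
    have h1 : x + c ≤ 2*x := by linarith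
    have hΓxc := Real.Gamma_pos_of_pos hxc0
    nlinarith [mul_le_mul_of_nonneg_left hhi (by linarith : (0:ℝ) ≤ x + c),
      mul_le_mul_of_nonneg_right h1 (le_of_lt (mul_pos (mul_pos hK₂ hxpc) hΓx))]

lemma gr_down {c : ℝ} (h : GR c) : GR (c-1) := by
  obtain ⟨K₁, K₂, X₀, hK₁, hK₂, hX₀, hb⟩ := h
  refine ⟨K₁/2, 2*K₂, max X₀ (2*|c|+4), by positivity, by positivity,
    le_trans hX₀ (le_max_left _ _), fun x hx => ?_⟩
  have hxX := le_trans (le_max_left _ _) hx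
  have hxc := le_trans (le_max_right _ _) hx
  have hx0 : (0:ℝ) < x := by have := abs_nonneg c; linarith
  have hc1 : -(x/2) + 2 ≤ c := by have := neg_abs_le c; linarith
  have hc2 : c ≤ x/2 := by have := le_abs_self c; linarith
  have hd0 : (0:ℝ) < x + c - 1 := by linarith
  have harg : x + c = (x + (c-1)) + 1 := by ring
  have hΓ : Real.Gamma (x + c) = (x + c - 1) * Real.Gamma (x + (c-1)) := by
    rw [harg, Real.Gamma_add_one (by linarith : x + (c-1) ≠ 0)]
    ring_nf
  obtain ⟨hlo, hhi⟩ := hb x hxX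
  have hpow : x ^ c = x ^ (c-1) * x := by
    rw [← Real.rpow_add_one hx0.ne']; ring_nf
  have hΓx := Real.Gamma_pos_of_pos hx0
  have hxpc : (0:ℝ) < x ^ (c-1) := Real.rpow_pos_of_pos hx0 _
  have hΓd : (0:ℝ) < Real.Gamma (x + (c-1)) := Real.Gamma_pos_of_pos (by linarith)
  rw [hΓ, hpow] at hlo hhi
  have hb1 : x/2 ≤ x + c - 1 := by linarith
  have hb2 : x + c - 1 ≤ 2*x := by linarith
  constructor
  · -- K₁/2 * x^(c-1) * Γ x ≤ Γ (x+(c-1))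
    -- from hlo : K₁ * (x^(c-1) * x) * Γ x ≤ (x+c-1) * Γ(x+(c-1)) ≤ 2x * Γ(x+(c-1))
    have h2 : (x+c-1) * Real.Gamma (x+(c-1)) ≤ 2*x * Real.Gamma (x+(c-1)) :=
      mul_le_mul_of_nonneg_right hb2 hΓd.le
    have h3 : K₁ * (x ^ (c-1) * x) * Real.Gamma x ≤ 2*x * Real.Gamma (x+(c-1)) :=
      le_trans hlo h2
    nlinarith
  · have h2 : x/2 * Real.Gamma (x+(c-1)) ≤ (x+c-1) * Real.Gamma (x+(c-1)) :=
      mul_le_mul_of_nonneg_right hb1 hΓd.le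
    have h3 : x/2 * Real.Gamma (x+(c-1)) ≤ K₂ * (x ^ (c-1) * x) * Real.Gamma x :=
      le_trans h2 hhi
    nlinarith

lemma gr_all (c : ℝ) : GR c := by
  have H : ∀ N : ℕ, ∀ c : ℝ, -(N:ℝ) ≤ c → c ≤ N+1 → GR c := by
    intro N
    induction N with
    | zero => intro c h1 h2; exact gr_base (by norm_num at h1 ⊢; linarith) (by norm_num at h2 ⊢; linarith)
    | succ N ih =>
      intro c h1 h2
      by_cases hlo : -(N:ℝ) ≤ c
      · by_cases hhi : c ≤ N+1
        · exact ih c hlo hhi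
        · push_neg at hhi
          have := ih (c-1) (by push_cast at h2 ⊢; linarith) (by push_cast at h2 ⊢; linarith)
          have := gr_up this
          simpa using this
      · push_neg at hlo
        have := ih (c+1) (by push_cast at h1 ⊢; linarith) (by push_cast at hlo ⊢; linarith)
        have := gr_down this
        simpa using this
  exact H ⌈|c|⌉₊ c (by
      have := Nat.le_ceil |c|; have := neg_abs_le c
      push_cast
      linarith [Nat.le_ceil |c|])
    (by
      have h := Nat.le_ceil |c|; have := le_abs_self c
      have h2 : |c| ≤ (⌈|c|⌉₊ : ℝ) := Nat.le_ceil _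
      linarith)


lemma rpow_sandwich (c : ℝ) {x y : ℝ} (hx : 0 < x) (hxy : x ≤ y) (hy2 : y ≤ 2*x) :
    (2:ℝ)^(-|c|) * x^c ≤ y^c ∧ y^c ≤ (2:ℝ)^|c| * x^c := by
  have hy0 : 0 < y := lt_of_lt_of_le hx hxy
  have ht1 : 1 ≤ y/x := (one_le_div hx).mpr hxy
  have ht2 : y/x ≤ 2 := (div_le_iff₀ hx).mpr (by linarith)
  have hyx : y^c = x^c * (y/x)^c := by
    rw [← Real.mul_rpow hx.le (by positivity)]
    congr 1
    field_simp
  have hxc : (0:ℝ) < x^c := Real.rpow_pos_of_pos hx _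
  have hup : (y/x)^c ≤ (2:ℝ)^|c| :=
    le_trans (Real.rpow_le_rpow_of_exponent_le ht1 (le_abs_self c))
      (Real.rpow_le_rpow (by linarith) ht2 (abs_nonneg c))
  have hlo : (2:ℝ)^(-|c|) ≤ (y/x)^c := by
    have h1 : (y/x)^(-|c|) ≤ (y/x)^c :=
      Real.rpow_le_rpow_of_exponent_le ht1 (neg_abs_le c)
    have h2 : (2:ℝ)^(-|c|) ≤ (y/x)^(-|c|) := by
      rw [Real.rpow_neg (by norm_num : (0:ℝ) ≤ 2), Real.rpow_neg (by linarith : (0:ℝ) ≤ y/x)]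
      exact inv_anti₀ (Real.rpow_pos_of_pos (by linarith) _)
        (Real.rpow_le_rpow (by linarith) ht2 (abs_nonneg c))
    linarith
  constructor
  · rw [hyx]
    nlinarith [mul_le_mul_of_nonneg_left hlo hxc.le]
  · rw [hyx]
    nlinarith [mul_le_mul_of_nonneg_left hup hxc.le]

lemma gamma_ratio_nat (c : ℝ) : ∃ K₁ K₂ : ℝ, 0 < K₁ ∧ 0 < K₂ ∧ ∃ n₀ : ℕ, 1 ≤ n₀ ∧
    ∀ n : ℕ, n₀ ≤ n →
    K₁ * (n:ℝ)^c * Real.Gamma ((n:ℝ)+1) ≤ Real.Gamma ((n:ℝ)+1+c) ∧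
    Real.Gamma ((n:ℝ)+1+c) ≤ K₂ * (n:ℝ)^c * Real.Gamma ((n:ℝ)+1) := by
  obtain ⟨K₁, K₂, X₀, hK₁, hK₂, hX₀, hb⟩ := gr_all c
  refine ⟨K₁ * 2^(-|c|), K₂ * 2^|c|, by positivity, by positivity, ⌈X₀⌉₊ + 1,
    Nat.le_add_left 1 _, fun n hn => ?_⟩
  have hn1 : 1 ≤ n := le_trans (Nat.le_add_left 1 _) hn
  have hn0 : (0:ℝ) < n := by exact_mod_cast hn1
  have hnX : X₀ ≤ (n:ℝ) + 1 := by
    have h1 : X₀ ≤ (⌈X₀⌉₊ : ℝ) := Nat.le_ceil _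
    have h2 : (⌈X₀⌉₊ : ℝ) ≤ n := by exact_mod_cast le_trans (Nat.le_add_right _ 1) hn
    linarith
  obtain ⟨hlo, hhi⟩ := hb ((n:ℝ)+1) hnX
  obtain ⟨hs1, hs2⟩ := rpow_sandwich c hn0 (by linarith : (n:ℝ) ≤ (n:ℝ)+1)
    (by nlinarith [show (1:ℝ) ≤ n from by exact_mod_cast hn1])
  have hΓ : (0:ℝ) < Real.Gamma ((n:ℝ)+1) := Real.Gamma_pos_of_pos (by linarith)
  constructor
  · calc K₁ * 2^(-|c|) * (n:ℝ)^c * Real.Gamma ((n:ℝ)+1)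
        ≤ K₁ * ((n:ℝ)+1)^c * Real.Gamma ((n:ℝ)+1) := by
          nlinarith [mul_le_mul_of_nonneg_left hs1 (mul_pos hK₁ hΓ).le]
    _ ≤ Real.Gamma ((n:ℝ)+1+c) := hlo
  · calc Real.Gamma ((n:ℝ)+1+c) ≤ K₂ * ((n:ℝ)+1)^c * Real.Gamma ((n:ℝ)+1) := hhi
    _ ≤ K₂ * 2^|c| * (n:ℝ)^c * Real.Gamma ((n:ℝ)+1) := by
          nlinarith [mul_le_mul_of_nonneg_left hs2 (mul_pos hK₂ hΓ).le]

set_option maxHeartbeats 2000000 in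
theorem even_gegenbauer_max_asymp (l m : ℝ) (hl : -(1 / 2 : ℝ) < l) (hm : 0 < m) :
    ∃ C₁ C₂ : ℝ, 0 < C₁ ∧ 0 < C₂ ∧ ∃ n₀ : ℕ, ∀ n : ℕ, n₀ ≤ n →
      C₁ * (n : ℝ) ^ (max l m) ≤
        sSup ((fun t : ℝ => |atilde2n l m n * jacobiP (l - 1 / 2) (m - 1 / 2) n (2 * t ^ 2 - 1)|) ''
          Set.Icc (-1) 1) ∧
      sSup ((fun t : ℝ => |atilde2n l m n * jacobiP (l - 1 / 2) (m - 1 / 2) n (2 * t ^ 2 - 1)|) ''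
          Set.Icc (-1) 1) ≤ C₂ * (n : ℝ) ^ (max l m) := by
  set a : ℝ := l - 1 / 2 with ha
  set b : ℝ := m - 1 / 2 with hbdef
  have ha1 : (0:ℝ) < a + 1 := by rw [ha]; linarith
  have hb1 : (0:ℝ) < b + 1 := by rw [hbdef]; linarith
  have hΓa : (0:ℝ) < Real.Gamma (a+1) := Real.Gamma_pos_of_pos ha1
  have hΓb : (0:ℝ) < Real.Gamma (b+1) := Real.Gamma_pos_of_pos hb1
  obtain ⟨Ka1, Ka2, hKa1, hKa2, na, hna1, hba⟩ := gamma_ratio_nat a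
  obtain ⟨Kb1, Kb2, hKb1, hKb2, nb, hnb1, hbb⟩ := gamma_ratio_nat b
  obtain ⟨Kc1, Kc2, hKc1, hKc2, nc, hnc1, hbc⟩ := gamma_ratio_nat (l+m-1)
  set α₁ : ℝ := Real.sqrt (Kc1 / (Ka2 * Kb2)) with hα₁
  set α₂ : ℝ := Real.sqrt (3 * Kc2 / (Ka1 * Kb1)) with hα₂
  have hα₁0 : 0 < α₁ := Real.sqrt_pos.mpr (by positivity)
  have hα₂0 : 0 < α₂ := Real.sqrt_pos.mpr (by positivity)
  set C₁ : ℝ := min (α₁ * Ka1 / Real.Gamma (a+1)) (α₁ * Kb1 / Real.Gamma (b+1)) with hC₁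
  set C₂ : ℝ := α₂ * (Ka2 / Real.Gamma (a+1) + Kb2 / Real.Gamma (b+1)) with hC₂
  have hC₁0 : 0 < C₁ := lt_min (by positivity) (by positivity)
  have hC₂0 : 0 < C₂ := by positivity
  refine ⟨C₁, C₂, hC₁0, hC₂0, max (max na nb) (max nc (⌈|l+m|⌉₊ + 1)), fun n hn => ?_⟩
  have hna : na ≤ n := le_trans (le_trans (le_max_left _ _) (le_max_left _ _)) hn
  have hnb : nb ≤ n := le_trans (le_trans (le_max_right _ _) (le_max_left _ _)) hn
  have hnc : nc ≤ n := le_trans (le_trans (le_max_left _ _) (le_max_right _ _)) hn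
  have hnlm : (⌈|l+m|⌉₊ + 1 : ℕ) ≤ n :=
    le_trans (le_trans (le_max_right _ _) (le_max_right _ _)) hn
  have hn1 : 1 ≤ n := le_trans hna1 hna
  have hnn : (0:ℝ) < n := by exact_mod_cast hn1
  have hℝ1 : (1:ℝ) ≤ n := by exact_mod_cast hn1
  have hlm : |l+m| + 1 ≤ (n:ℝ) := by
    have h1 : |l+m| ≤ (⌈|l+m|⌉₊ : ℝ) := Nat.le_ceil _
    have h2 : ((⌈|l+m|⌉₊ + 1 : ℕ) : ℝ) ≤ n := by exact_mod_cast hnlm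
    push_cast at h2
    linarith
  have hlm1 : -(n:ℝ) + 1 ≤ l + m := by have := neg_abs_le (l+m); linarith
  have hlm2 : l + m ≤ (n:ℝ) - 1 := by have := le_abs_self (l+m); linarith
  have hG0 : 0 < Real.Gamma ((n:ℝ)+1) := Real.Gamma_pos_of_pos (by linarith)
  obtain ⟨hga1, hga2⟩ := hba n hna
  obtain ⟨hgb1, hgb2⟩ := hbb n hnb
  obtain ⟨hgc1, hgc2⟩ := hbc n hnc
  have hP0 : 0 < (n:ℝ)^a := Real.rpow_pos_of_pos hnn _
  have hQ0 : 0 < (n:ℝ)^b := Real.rpow_pos_of_pos hnn _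
  have hPQ : (n:ℝ)^(l+m-1) = (n:ℝ)^a * (n:ℝ)^b := by
    rw [← Real.rpow_add hnn]
    congr 1
    rw [ha, hbdef]; ring
  -- Gamma value positivity and bounds
  have hΓ3pos : 0 < Real.Gamma ((n:ℝ)+l+m) := Real.Gamma_pos_of_pos (by linarith)
  have hΓapos : 0 < Real.Gamma ((n:ℝ)+l+1/2) := Real.Gamma_pos_of_pos (by linarith)
  have hΓbpos : 0 < Real.Gamma ((n:ℝ)+m+1/2) := Real.Gamma_pos_of_pos (by linarith)
  have ega : Real.Gamma ((n:ℝ)+l+1/2) = Real.Gamma ((n:ℝ)+1+a) := by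
    rw [show (n:ℝ)+l+1/2 = (n:ℝ)+1+a from by rw [ha]; ring]
  have egb : Real.Gamma ((n:ℝ)+m+1/2) = Real.Gamma ((n:ℝ)+1+b) := by
    rw [show (n:ℝ)+m+1/2 = (n:ℝ)+1+b from by rw [hbdef]; ring]
  have egc : Real.Gamma ((n:ℝ)+l+m) = Real.Gamma ((n:ℝ)+1+(l+m-1)) := by
    rw [show (n:ℝ)+l+m = (n:ℝ)+1+(l+m-1) from by ring]
  rw [hPQ] at hgc1 hgc2
  rw [← ega] at hga1 hga2
  rw [← egb] at hgb1 hgb2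
  rw [← egc] at hgc1 hgc2
  -- bounds on z
  set num : ℝ := (2*(n:ℝ)+l+m) * Real.Gamma ((n:ℝ)+1) * Real.Gamma ((n:ℝ)+l+m) with hnum
  set den : ℝ := Real.Gamma ((n:ℝ)+l+1/2) * Real.Gamma ((n:ℝ)+m+1/2) with hden
  have hden0 : 0 < den := mul_pos hΓapos hΓbpos
  have hnum0 : 0 < num := by
    apply mul_pos (mul_pos (by rw [hnum] at *; linarith) hG0) hΓ3pos
  have hnum_lo : (n:ℝ) * Real.Gamma ((n:ℝ)+1) * (Kc1 * ((n:ℝ)^a*(n:ℝ)^b) * Real.Gamma ((n:ℝ)+1)) ≤ num := by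
    rw [hnum]
    have h1 : (n:ℝ) * Real.Gamma ((n:ℝ)+1) * (Kc1 * ((n:ℝ)^a*(n:ℝ)^b) * Real.Gamma ((n:ℝ)+1)) ≤ (n:ℝ) * Real.Gamma ((n:ℝ)+1) * Real.Gamma ((n:ℝ)+l+m) :=
      mul_le_mul_of_nonneg_left hgc1 (by positivity)
    have h2 : (n:ℝ) * Real.Gamma ((n:ℝ)+1) * Real.Gamma ((n:ℝ)+l+m)
        ≤ (2*(n:ℝ)+l+m) * Real.Gamma ((n:ℝ)+1) * Real.Gamma ((n:ℝ)+l+m) := by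
      apply mul_le_mul_of_nonneg_right _ hΓ3pos.le
      apply mul_le_mul_of_nonneg_right _ hG0.le
      linarith
    linarith
  have hnum_hi : num ≤ 3*(n:ℝ) * Real.Gamma ((n:ℝ)+1) * (Kc2 * ((n:ℝ)^a*(n:ℝ)^b) * Real.Gamma ((n:ℝ)+1)) := by
    rw [hnum]
    have h1 : (2*(n:ℝ)+l+m) * Real.Gamma ((n:ℝ)+1) * Real.Gamma ((n:ℝ)+l+m)
        ≤ 3*(n:ℝ) * Real.Gamma ((n:ℝ)+1) * Real.Gamma ((n:ℝ)+l+m) := by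
      apply mul_le_mul_of_nonneg_right _ hΓ3pos.le
      apply mul_le_mul_of_nonneg_right _ hG0.le
      linarith
    have h2 : 3*(n:ℝ) * Real.Gamma ((n:ℝ)+1) * Real.Gamma ((n:ℝ)+l+m) ≤ 3*(n:ℝ) * Real.Gamma ((n:ℝ)+1) * (Kc2 * ((n:ℝ)^a*(n:ℝ)^b) * Real.Gamma ((n:ℝ)+1)) :=
      mul_le_mul_of_nonneg_left hgc2 (by positivity)
    linarith
  have hden_lo : (Ka1 * (n:ℝ)^a * Real.Gamma ((n:ℝ)+1)) * (Kb1 * (n:ℝ)^b * Real.Gamma ((n:ℝ)+1)) ≤ den :=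
    mul_le_mul hga1 hgb1 (by positivity) hΓapos.le
  have hden_hi : den ≤ (Ka2 * (n:ℝ)^a * Real.Gamma ((n:ℝ)+1)) * (Kb2 * (n:ℝ)^b * Real.Gamma ((n:ℝ)+1)) :=
    mul_le_mul hga2 hgb2 hΓbpos.le (by positivity)
  have hz_lo : Kc1 / (Ka2 * Kb2) * (n:ℝ) ≤ num / den := by
    have h := div_le_div₀ hnum0.le hnum_lo hden0 hden_hi
    calc Kc1 / (Ka2 * Kb2) * (n:ℝ)
        = ((n:ℝ) * Real.Gamma ((n:ℝ)+1) * (Kc1 * ((n:ℝ)^a*(n:ℝ)^b) * Real.Gamma ((n:ℝ)+1))) / ((Ka2 * (n:ℝ)^a * Real.Gamma ((n:ℝ)+1)) * (Kb2 * (n:ℝ)^b * Real.Gamma ((n:ℝ)+1))) := by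
          field_simp
      _ ≤ num / den := h
  have hz_hi : num / den ≤ 3 * Kc2 / (Ka1 * Kb1) * (n:ℝ) := by
    have h := div_le_div₀ (by positivity) hnum_hi hden0 (le_refl den)
    have h2 := div_le_div₀ (by positivity : (0:ℝ) ≤ 3*(n:ℝ) * Real.Gamma ((n:ℝ)+1) * (Kc2 * ((n:ℝ)^a*(n:ℝ)^b) * Real.Gamma ((n:ℝ)+1)))
      (le_refl (3*(n:ℝ) * Real.Gamma ((n:ℝ)+1) * (Kc2 * ((n:ℝ)^a*(n:ℝ)^b) * Real.Gamma ((n:ℝ)+1)))) (by positivity) hden_lo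
    calc num / den ≤ (3*(n:ℝ) * Real.Gamma ((n:ℝ)+1) * (Kc2 * ((n:ℝ)^a*(n:ℝ)^b) * Real.Gamma ((n:ℝ)+1))) / den := h
      _ ≤ (3*(n:ℝ) * Real.Gamma ((n:ℝ)+1) * (Kc2 * ((n:ℝ)^a*(n:ℝ)^b) * Real.Gamma ((n:ℝ)+1))) / ((Ka1 * (n:ℝ)^a * Real.Gamma ((n:ℝ)+1)) * (Kb1 * (n:ℝ)^b * Real.Gamma ((n:ℝ)+1))) := h2
      _ = 3 * Kc2 / (Ka1 * Kb1) * (n:ℝ) := by field_simp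
  -- A = sqrt of z
  have hAeq : atilde2n l m n = Real.sqrt (num / den) := by
    rw [atilde2n, Real.sqrt_eq_rpow, hnum, hden]
  have hA0 : 0 ≤ atilde2n l m n := by rw [hAeq]; exact Real.sqrt_nonneg _
  have hA_lo : α₁ * (n:ℝ)^((1:ℝ)/2) ≤ atilde2n l m n := by
    rw [hAeq, hα₁]
    calc Real.sqrt (Kc1 / (Ka2 * Kb2)) * (n:ℝ)^((1:ℝ)/2)
        = Real.sqrt (Kc1 / (Ka2 * Kb2) * (n:ℝ)) := by
          rw [Real.sqrt_mul (by positivity), Real.sqrt_eq_rpow ((n:ℝ))]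
      _ ≤ Real.sqrt (num / den) := Real.sqrt_le_sqrt hz_lo
  have hA_hi : atilde2n l m n ≤ α₂ * (n:ℝ)^((1:ℝ)/2) := by
    rw [hAeq, hα₂]
    calc Real.sqrt (num / den) ≤ Real.sqrt (3 * Kc2 / (Ka1 * Kb1) * (n:ℝ)) :=
          Real.sqrt_le_sqrt hz_hi
      _ = Real.sqrt (3 * Kc2 / (Ka1 * Kb1)) * (n:ℝ)^((1:ℝ)/2) := by
          rw [Real.sqrt_mul (by positivity), Real.sqrt_eq_rpow ((n:ℝ))]
  have hga1' : Ka1 * (n:ℝ)^a * Real.Gamma ((n:ℝ)+1) ≤ Real.Gamma ((n:ℝ)+1+a) := by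
    rw [← ega]; exact hga1
  have hga2' : Real.Gamma ((n:ℝ)+1+a) ≤ Ka2 * (n:ℝ)^a * Real.Gamma ((n:ℝ)+1) := by
    rw [← ega]; exact hga2
  have hgb1' : Kb1 * (n:ℝ)^b * Real.Gamma ((n:ℝ)+1) ≤ Real.Gamma ((n:ℝ)+1+b) := by
    rw [← egb]; exact hgb1
  have hgb2' : Real.Gamma ((n:ℝ)+1+b) ≤ Kb2 * (n:ℝ)^b * Real.Gamma ((n:ℝ)+1) := by
    rw [← egb]; exact hgb2
  -- endpoint values
  have hfact : (n.factorial : ℝ) = Real.Gamma ((n:ℝ)+1) := by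
    rw [Real.Gamma_nat_eq_factorial]
  have hy1 : jacobiP a b n 1 = Real.Gamma ((n:ℝ)+1+a) / (Real.Gamma (a+1) * Real.Gamma ((n:ℝ)+1)) := by
    rw [jacobiP_one, hfact]
    have hp : poch (a+1) n = Real.Gamma ((n:ℝ)+1+a) / Real.Gamma (a+1) := by
      have := Gamma_poch ha1 n
      rw [show (a+1) + (n:ℝ) = (n:ℝ)+1+a from by ring] at this
      field_simp [this]
      exact this.symm
    rw [hp, div_div]
  have hym1 : |jacobiP a b n (-1)| = Real.Gamma ((n:ℝ)+1+b) / (Real.Gamma (b+1) * Real.Gamma ((n:ℝ)+1)) := by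
    have hp : poch (b+1) n = Real.Gamma ((n:ℝ)+1+b) / Real.Gamma (b+1) := by
      have := Gamma_poch hb1 n
      rw [show (b+1) + (n:ℝ) = (n:ℝ)+1+b from by ring] at this
      field_simp [this]
      exact this.symm
    have habs : |(-1:ℝ)^n * poch (b+1) n / (n.factorial:ℝ)| = poch (b+1) n / (n.factorial:ℝ) := by
      rw [abs_div, abs_mul, abs_pow, abs_neg, abs_one, one_pow, one_mul,
        abs_of_pos (poch_pos hb1 n), abs_of_pos (by positivity : (0:ℝ) < (n.factorial:ℝ))]
    rw [jacobiP_neg_one, habs, hp, hfact, div_div]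
  have hy1abs : |jacobiP a b n 1| = Real.Gamma ((n:ℝ)+1+a) / (Real.Gamma (a+1) * Real.Gamma ((n:ℝ)+1)) := by
    rw [hy1, abs_of_pos (div_pos (Real.Gamma_pos_of_pos (by linarith)) (mul_pos hΓa hG0))]
  -- bounds on endpoint values
  have hy1_lo : Ka1 / Real.Gamma (a+1) * (n:ℝ)^a ≤ |jacobiP a b n 1| := by
    rw [hy1abs, le_div_iff₀ (mul_pos hΓa hG0)]
    calc Ka1 / Real.Gamma (a+1) * (n:ℝ)^a * (Real.Gamma (a+1) * Real.Gamma ((n:ℝ)+1)) = Ka1 * (n:ℝ)^a * Real.Gamma ((n:ℝ)+1) := by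
          field_simp [hΓa.ne']
      _ ≤ Real.Gamma ((n:ℝ)+1+a) := hga1'
  have hy1_hi : |jacobiP a b n 1| ≤ Ka2 / Real.Gamma (a+1) * (n:ℝ)^a := by
    rw [hy1abs, div_le_iff₀ (mul_pos hΓa hG0)]
    calc Real.Gamma ((n:ℝ)+1+a) ≤ Ka2 * (n:ℝ)^a * Real.Gamma ((n:ℝ)+1) := hga2'
      _ = Ka2 / Real.Gamma (a+1) * (n:ℝ)^a * (Real.Gamma (a+1) * Real.Gamma ((n:ℝ)+1)) := by
        field_simp [hΓa.ne']
  have hym1_lo : Kb1 / Real.Gamma (b+1) * (n:ℝ)^b ≤ |jacobiP a b n (-1)| := by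
    rw [hym1, le_div_iff₀ (mul_pos hΓb hG0)]
    calc Kb1 / Real.Gamma (b+1) * (n:ℝ)^b * (Real.Gamma (b+1) * Real.Gamma ((n:ℝ)+1)) = Kb1 * (n:ℝ)^b * Real.Gamma ((n:ℝ)+1) := by
          field_simp [hΓb.ne']
      _ ≤ Real.Gamma ((n:ℝ)+1+b) := hgb1'
  have hym1_hi : |jacobiP a b n (-1)| ≤ Kb2 / Real.Gamma (b+1) * (n:ℝ)^b := by
    rw [hym1, div_le_iff₀ (mul_pos hΓb hG0)]
    calc Real.Gamma ((n:ℝ)+1+b) ≤ Kb2 * (n:ℝ)^b * Real.Gamma ((n:ℝ)+1) := hgb2'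
      _ = Kb2 / Real.Gamma (b+1) * (n:ℝ)^b * (Real.Gamma (b+1) * Real.Gamma ((n:ℝ)+1)) := by
        field_simp [hΓb.ne']
  -- the sup
  set f : ℝ → ℝ := fun t : ℝ => |atilde2n l m n * jacobiP a b n (2 * t ^ 2 - 1)| with hf
  set M : ℝ := atilde2n l m n * max |jacobiP a b n (-1)| |jacobiP a b n 1| with hM
  have hmax := jacobi_max a b (by rw [hbdef]; linarith) n
    (by
      have h1 : (0:ℝ) < (n:ℝ)+a+b+1 := by rw [ha, hbdef]; linarith
      positivity)
  have hub : ∀ v ∈ f '' Set.Icc (-1:ℝ) 1, v ≤ M := by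
    rintro v ⟨t, ht, rfl⟩
    have ht2 : 2*t^2 - 1 ∈ Set.Icc (-1:ℝ) 1 := by
      have h1 : -1 ≤ t := ht.1
      have h2 : t ≤ 1 := ht.2
      have h3 : t^2 ≤ 1 := by
        rw [← sq_abs]
        exact pow_le_one₀ (abs_nonneg t) (abs_le.mpr ⟨h1, h2⟩)
      have h4 : 0 ≤ t^2 := sq_nonneg t
      constructor
      · linarith
      · linarith
    calc f t = atilde2n l m n * |jacobiP a b n (2*t^2-1)| := by
          rw [hf]; simp only [abs_mul, abs_of_nonneg hA0]
      _ ≤ M := mul_le_mul_of_nonneg_left (hmax _ ht2) hA0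
  have hne : (f '' Set.Icc (-1:ℝ) 1).Nonempty :=
    ⟨f 1, Set.mem_image_of_mem f (by constructor <;> norm_num)⟩
  have hbdd : BddAbove (f '' Set.Icc (-1:ℝ) 1) := ⟨M, fun v hv => hub v hv⟩
  have hS_ub : sSup (f '' Set.Icc (-1:ℝ) 1) ≤ M := csSup_le hne hub
  have hf1 : f 1 = atilde2n l m n * |jacobiP a b n 1| := by
    rw [hf]
    norm_num [abs_mul, abs_of_nonneg hA0]
  have hf0 : f 0 = atilde2n l m n * |jacobiP a b n (-1)| := by
    rw [hf]
    norm_num [abs_mul, abs_of_nonneg hA0]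
  have hS_f1 : atilde2n l m n * |jacobiP a b n 1| ≤ sSup (f '' Set.Icc (-1:ℝ) 1) := by
    rw [← hf1]
    exact le_csSup hbdd (Set.mem_image_of_mem f (by constructor <;> norm_num))
  have hS_f0 : atilde2n l m n * |jacobiP a b n (-1)| ≤ sSup (f '' Set.Icc (-1:ℝ) 1) := by
    rw [← hf0]
    exact le_csSup hbdd (Set.mem_image_of_mem f (by constructor <;> norm_num))
  constructor
  · -- lower bound
    rcases le_total l m with hlm' | hlm'
    · rw [max_eq_right hlm']
      calc C₁ * (n:ℝ)^m ≤ α₁ * Kb1 / Real.Gamma (b+1) * (n:ℝ)^m :=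
            mul_le_mul_of_nonneg_right (min_le_right _ _) (Real.rpow_pos_of_pos hnn m).le
        _ = (α₁ * (n:ℝ)^((1:ℝ)/2)) * (Kb1 / Real.Gamma (b+1) * (n:ℝ)^b) := by
            rw [show (n:ℝ)^m = (n:ℝ)^((1:ℝ)/2) * (n:ℝ)^b from by
              rw [← Real.rpow_add hnn]
              congr 1
              rw [hbdef]; ring]
            ring
        _ ≤ atilde2n l m n * |jacobiP a b n (-1)| :=
            mul_le_mul hA_lo hym1_lo (by positivity) hA0
        _ ≤ _ := hS_f0
    · rw [max_eq_left hlm']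
      calc C₁ * (n:ℝ)^l ≤ α₁ * Ka1 / Real.Gamma (a+1) * (n:ℝ)^l :=
            mul_le_mul_of_nonneg_right (min_le_left _ _) (Real.rpow_pos_of_pos hnn l).le
        _ = (α₁ * (n:ℝ)^((1:ℝ)/2)) * (Ka1 / Real.Gamma (a+1) * (n:ℝ)^a) := by
            rw [show (n:ℝ)^l = (n:ℝ)^((1:ℝ)/2) * (n:ℝ)^a from by
              rw [← Real.rpow_add hnn]
              congr 1
              rw [ha]; ring]
            ring
        _ ≤ atilde2n l m n * |jacobiP a b n 1| :=
            mul_le_mul hA_lo hy1_lo (by positivity) hA0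
        _ ≤ _ := hS_f1
  · -- upper bound
    have hmaxle : max |jacobiP a b n (-1)| |jacobiP a b n 1|
        ≤ Ka2 / Real.Gamma (a+1) * (n:ℝ)^a + Kb2 / Real.Gamma (b+1) * (n:ℝ)^b := by
      apply max_le
      · calc |jacobiP a b n (-1)| ≤ Kb2 / Real.Gamma (b+1) * (n:ℝ)^b := hym1_hi
          _ ≤ _ := le_add_of_nonneg_left (by positivity)
      · calc |jacobiP a b n 1| ≤ Ka2 / Real.Gamma (a+1) * (n:ℝ)^a := hy1_hi
          _ ≤ _ := le_add_of_nonneg_right (by positivity)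
    have hPle : (n:ℝ)^a ≤ (n:ℝ)^(max l m - 1/2) := by
      apply Real.rpow_le_rpow_of_exponent_le hℝ1
      rw [ha]
      have := le_max_left l m
      linarith
    have hQle : (n:ℝ)^b ≤ (n:ℝ)^(max l m - 1/2) := by
      apply Real.rpow_le_rpow_of_exponent_le hℝ1
      rw [hbdef]
      have := le_max_right l m
      linarith
    have hsplit : (n:ℝ)^(max l m) = (n:ℝ)^((1:ℝ)/2) * (n:ℝ)^(max l m - 1/2) := by
      rw [← Real.rpow_add hnn]
      congr 1
      ring
    calc sSup (f '' Set.Icc (-1:ℝ) 1) ≤ M := hS_ub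
      _ ≤ (α₂ * (n:ℝ)^((1:ℝ)/2)) * (Ka2 / Real.Gamma (a+1) * (n:ℝ)^a + Kb2 / Real.Gamma (b+1) * (n:ℝ)^b) := by
          rw [hM]
          apply mul_le_mul hA_hi hmaxle (le_max_of_le_left (abs_nonneg _)) (by positivity)
      _ ≤ (α₂ * (n:ℝ)^((1:ℝ)/2)) * ((Ka2 / Real.Gamma (a+1) + Kb2 / Real.Gamma (b+1))
            * (n:ℝ)^(max l m - 1/2)) := by
          apply mul_le_mul_of_nonneg_left _ (by positivity)
          have h1 := mul_le_mul_of_nonneg_left hPle (by positivity : (0:ℝ) ≤ Ka2 / Real.Gamma (a+1))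
          have h2 := mul_le_mul_of_nonneg_left hQle (by positivity : (0:ℝ) ≤ Kb2 / Real.Gamma (b+1))
          linarith
      _ = C₂ * (n:ℝ)^(max l m) := by
          rw [hC₂, hsplit]
          ring
end

section
/- Let λ > -1/2 and μ > 0. With C̃_{2n+1}^{(λ,μ)}(t) = ã_{2n+1}^{(λ,μ)} t P_n^{(λ-1/2, μ+1/2)}(2t² - 1), the value at t = 1 satisfies C̃_{2n+1}^{(λ,μ)}(1) ≳ n^λ as n → ∞; hence max_{t ∈ [-1,1]} |C̃_{2n+1}^{(λ,μ)}(t)| ≳ n^λ. -/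
open Real Set

/-- Normalization constant for odd orthonormal generalized Gegenbauer polynomials. -/
noncomputable def atilde2n1 (l m : ℝ) (n : ℕ) : ℝ :=
  (((2 * n + l + m + 1) * Real.Gamma (n + 1) * Real.Gamma (n + l + m + 1)) /
    (Real.Gamma (n + l + 1 / 2) * Real.Gamma (n + m + 3 / 2))) ^ ((1 : ℝ) / 2)

lemma Gamma_add_nat' (q : ℝ) (hq : 0 < q) (n : ℕ) :
    Real.Gamma (q + n) = (ascPochhammer ℝ n).eval q * Real.Gamma q := by
  induction n with
  | zero => simp
  | succ n ih =>
    have hqn : (q + (n : ℝ)) ≠ 0 := by positivity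
    have h1 : q + ((n + 1 : ℕ) : ℝ) = (q + n) + 1 := by push_cast; ring
    rw [h1, Real.Gamma_add_one hqn, ih, ascPochhammer_succ_right, Polynomial.eval_mul]
    simp
    ring

lemma jacobiP_at_one (a b : ℝ) (n : ℕ) :
    jacobiP a b n 1 = (Nat.factorial n : ℝ)⁻¹ * (ascPochhammer ℝ n).eval (a + 1) := by
  unfold jacobiP
  congr 1
  rw [Finset.sum_eq_single 0]
  · simp
  · intro k _ hk0
    have h0 : ((1 : ℝ) - 1) / 2 = 0 := by norm_num
    rw [h0, zero_pow hk0, mul_zero]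
  · intro h
    exact absurd (Finset.mem_range.mpr (Nat.succ_pos n)) h

lemma gamma_lb_base {δ : ℝ} (hδ1 : -1 < δ) (hδ0 : δ ≤ 0) :
    ∀ x : ℝ, 2 ≤ x → (2:ℝ) ^ δ * x ^ δ * Real.Gamma x ≤ Real.Gamma (x + δ) := by
  intro x hx
  have hx0 : (0:ℝ) < x := by linarith
  rcases eq_or_lt_of_le hδ0 with h0 | h0
  · rw [h0]; simp
  · have ha : (0:ℝ) < δ + 1 := by linarith
    have hb : (0:ℝ) < -δ := by linarith
    have hs : (0:ℝ) < x + δ + 1 := by linarith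
    have ht : (0:ℝ) < x + δ + 2 := by linarith
    have hxd : (0:ℝ) < x + δ := by linarith
    have key := Real.Gamma_mul_add_mul_le_rpow_Gamma_mul_rpow_Gamma
      (s := x + δ + 1) (t := x + δ + 2) (a := δ + 1) (b := -δ) hs ht ha hb (by ring)
    have harg : (δ + 1) * (x + δ + 1) + (-δ) * (x + δ + 2) = x + 1 := by ring
    rw [harg] at key
    have e1 : Real.Gamma (x + 1) = x * Real.Gamma x := Real.Gamma_add_one hx0.ne'
    have e2 : Real.Gamma (x + δ + 2) = (x + δ + 1) * Real.Gamma (x + δ + 1) := by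
      have h : x + δ + 2 = (x + δ + 1) + 1 := by ring
      rw [h, Real.Gamma_add_one hs.ne']
    have e3 : Real.Gamma (x + δ + 1) = (x + δ) * Real.Gamma (x + δ) := by
      have h : x + δ + 1 = (x + δ) + 1 := by ring
      rw [h, Real.Gamma_add_one hxd.ne']
    have hG : 0 < Real.Gamma (x + δ) := Real.Gamma_pos_of_pos hxd
    rw [e1, e2, e3] at key
    have hGg : 0 < (x + δ) * Real.Gamma (x + δ) := by positivity
    have hrw : ((x + δ) * Real.Gamma (x + δ)) ^ (δ + 1) *
        ((x + δ + 1) * ((x + δ) * Real.Gamma (x + δ))) ^ (-δ) =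
        (x + δ) * Real.Gamma (x + δ) * (x + δ + 1) ^ (-δ) := by
      rw [Real.mul_rpow hs.le hGg.le, ← mul_assoc,
        mul_comm (((x + δ) * Real.Gamma (x + δ)) ^ (δ + 1)) ((x + δ + 1) ^ (-δ)), mul_assoc,
        ← Real.rpow_add hGg, show δ + 1 + -δ = 1 by ring, Real.rpow_one]
      ring
    rw [hrw] at key
    have h2x : x + δ + 1 ≤ 2 * x := by linarith
    have hmono : (x + δ + 1) ^ (-δ) ≤ (2 * x) ^ (-δ) :=
      Real.rpow_le_rpow hs.le h2x hb.le
    have key2 : x * Real.Gamma x ≤ x * Real.Gamma (x + δ) * (2 * x) ^ (-δ) := by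
      calc x * Real.Gamma x ≤ (x + δ) * Real.Gamma (x + δ) * (x + δ + 1) ^ (-δ) := key
        _ ≤ x * Real.Gamma (x + δ) * (2 * x) ^ (-δ) := by
            apply mul_le_mul (by nlinarith) hmono (by positivity) (by positivity)
    have key3 : Real.Gamma x ≤ Real.Gamma (x + δ) * (2 * x) ^ (-δ) :=
      (mul_le_mul_iff_right₀ hx0).mp
        (by linarith [key2] : x * Real.Gamma x ≤ x * (Real.Gamma (x + δ) * (2 * x) ^ (-δ)))
    have h2x0 : (0:ℝ) < 2 * x := by linarith
    calc (2:ℝ) ^ δ * x ^ δ * Real.Gamma x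
        = (2 * x) ^ δ * Real.Gamma x := by rw [Real.mul_rpow (by norm_num) hx0.le]
      _ ≤ (2 * x) ^ δ * (Real.Gamma (x + δ) * (2 * x) ^ (-δ)) := by
          apply mul_le_mul_of_nonneg_left key3 (by positivity)
      _ = Real.Gamma (x + δ) := by
          rw [mul_comm (Real.Gamma (x + δ)) _, ← mul_assoc, ← Real.rpow_add h2x0]
          simp

lemma gamma_lb_step {δ : ℝ} (hδ1 : -1 < δ) (hδ0 : δ ≤ 0) (k : ℕ) :
    ∀ x : ℝ, 2 ≤ x →
      (2:ℝ) ^ δ * (2:ℝ)⁻¹ ^ k * x ^ (δ + k) * Real.Gamma x ≤ Real.Gamma (x + (δ + k)) := by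
  induction k with
  | zero => simpa using gamma_lb_base hδ1 hδ0
  | succ k ih =>
    intro x hx
    have hx0 : (0:ℝ) < x := by linarith
    have hkn : (0:ℝ) ≤ (k:ℝ) := Nat.cast_nonneg k
    have hpos : 0 < x + (δ + k) := by linarith
    have hG : 0 < Real.Gamma (x + (δ + k)) := Real.Gamma_pos_of_pos hpos
    have h1 : x + (δ + ((k+1 : ℕ):ℝ)) = (x + (δ + k)) + 1 := by push_cast; ring
    rw [h1, Real.Gamma_add_one hpos.ne']
    have e1 : x ^ (δ + ((k+1:ℕ):ℝ)) = x ^ (δ + k) * x := by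
      push_cast
      rw [show δ + ((k:ℝ) + 1) = (δ + k) + 1 by ring, Real.rpow_add hx0, Real.rpow_one]
    have h2 : x / 2 ≤ x + (δ + k) := by linarith
    calc (2:ℝ) ^ δ * (2:ℝ)⁻¹ ^ (k+1) * x ^ (δ + ((k+1:ℕ):ℝ)) * Real.Gamma x
        = ((2:ℝ) ^ δ * (2:ℝ)⁻¹ ^ k * x ^ (δ + k) * Real.Gamma x) * (x / 2) := by
          rw [e1, pow_succ]; ring
      _ ≤ Real.Gamma (x + (δ + k)) * (x / 2) := by
          apply mul_le_mul_of_nonneg_right (ih x hx) (by positivity)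
      _ ≤ Real.Gamma (x + (δ + k)) * (x + (δ + k)) := by
          apply mul_le_mul_of_nonneg_left h2 hG.le
      _ = (x + (δ + k)) * Real.Gamma (x + (δ + k)) := mul_comm _ _

lemma gamma_ratio_lb (δ : ℝ) (hδ : -1 < δ) :
    ∃ c : ℝ, 0 < c ∧ ∀ x : ℝ, 2 ≤ x →
      c * x ^ δ * Real.Gamma x ≤ Real.Gamma (x + δ) := by
  set k := ⌈δ⌉₊ with hk
  have hk1 : δ ≤ (k : ℝ) := Nat.le_ceil δ
  have hδ0' : δ - k ≤ 0 := by linarith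
  have hδ1' : -1 < δ - k := by
    rcases le_or_gt δ 0 with h | h
    · have h0 : k = 0 := Nat.ceil_eq_zero.mpr h
      rw [h0]; simpa using hδ
    · have h1 : (k:ℝ) < δ + 1 := Nat.ceil_lt_add_one h.le
      linarith
  refine ⟨(2:ℝ) ^ (δ - k) * (2:ℝ)⁻¹ ^ k, by positivity, fun x hx => ?_⟩
  have h := gamma_lb_step hδ1' hδ0' k x hx
  rw [show δ - (k:ℝ) + (k:ℝ) = δ by ring] at h
  exact h

lemma rpow_min_le {δ z y : ℝ} (hz : 0 < z) (h1 : z ≤ y) (h2 : y ≤ 2 * z) :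
    min 1 ((2:ℝ) ^ δ) * z ^ δ ≤ y ^ δ := by
  rcases le_or_gt 0 δ with h | h
  · calc min 1 ((2:ℝ) ^ δ) * z ^ δ ≤ 1 * z ^ δ :=
        mul_le_mul_of_nonneg_right (min_le_left _ _) (Real.rpow_nonneg hz.le δ)
      _ = z ^ δ := one_mul _
      _ ≤ y ^ δ := Real.rpow_le_rpow hz.le h1 h
  · calc min 1 ((2:ℝ) ^ δ) * z ^ δ ≤ (2:ℝ) ^ δ * z ^ δ :=
        mul_le_mul_of_nonneg_right (min_le_right _ _) (Real.rpow_nonneg hz.le δ)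
      _ = (2 * z) ^ δ := (Real.mul_rpow (by norm_num) hz.le).symm
      _ ≤ y ^ δ := Real.rpow_le_rpow_of_nonpos (by linarith) h2 h.le

set_option maxHeartbeats 1600000 in
theorem odd_gegenbauer_value_at_one_lower_bound (l m : ℝ) (hl : -(1 / 2 : ℝ) < l)
    (hm : 0 < m) :
    ∃ c : ℝ, 0 < c ∧ ∃ n₀ : ℕ, ∀ n : ℕ, n₀ ≤ n →
      c * (n : ℝ) ^ l ≤ atilde2n1 l m n * 1 * jacobiP (l - 1 / 2) (m + 1 / 2) n (2 * 1 ^ 2 - 1) ∧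
      c * (n : ℝ) ^ l ≤
        sSup ((fun t : ℝ =>
            |atilde2n1 l m n * t * jacobiP (l - 1 / 2) (m + 1 / 2) n (2 * t ^ 2 - 1)|) ''
          Set.Icc (-1) 1) := by
  have hl2 : 0 < l + 1 / 2 := by linarith
  obtain ⟨c₀, hc₀, hbound⟩ := gamma_ratio_lb (l - 1 / 2) (by linarith)
  have hCl : 0 < Real.Gamma (l + 1 / 2) := Real.Gamma_pos_of_pos hl2
  set a : ℝ := min 1 ((2:ℝ) ^ (l - 1 / 2)) with ha
  have ha0 : 0 < a := lt_min one_pos (Real.rpow_pos_of_pos two_pos _)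
  set c : ℝ := c₀ * a / Real.Gamma (l + 1 / 2) with hc
  have hcpos : 0 < c := by rw [hc]; positivity
  clear_value a c
  refine ⟨c, hcpos, ?_⟩
  obtain ⟨n₀, hn₀⟩ := exists_nat_ge (max 2 (m + 3 / 2))
  refine ⟨n₀, fun n hn => ?_⟩
  set N : ℝ := (n : ℝ) with hNdef
  have hmax : max 2 (m + 3 / 2) ≤ N := le_trans hn₀ (Nat.cast_le.mpr hn)
  have hN2 : (2:ℝ) ≤ N := le_trans (le_max_left _ _) hmax
  have hNm : m + 3 / 2 ≤ N := le_trans (le_max_right _ _) hmax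
  have hN0 : (0:ℝ) < N := by linarith
  -- Gamma values
  set A : ℝ := Real.Gamma (N + l + m + 1) with hA
  set B : ℝ := Real.Gamma (N + l + 1 / 2) with hB
  set C : ℝ := Real.Gamma (N + m + 3 / 2) with hC
  set D : ℝ := Real.Gamma (N + 1) with hD
  have hApos : 0 < A := by rw [hA]; exact Real.Gamma_pos_of_pos (by linarith)
  have hBpos : 0 < B := by rw [hB]; exact Real.Gamma_pos_of_pos (by linarith)
  have hCpos : 0 < C := by rw [hC]; exact Real.Gamma_pos_of_pos (by linarith)
  have hDpos : 0 < D := by rw [hD]; exact Real.Gamma_pos_of_pos (by linarith)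
  have hLpos : (0:ℝ) < 2 * N + l + m + 1 := by linarith
  -- bounds from Gautschi-type lemma
  have hb1 : c₀ * (N + 1) ^ (l - 1 / 2) * D ≤ B := by
    have h := hbound (N + 1) (by linarith)
    rwa [show N + 1 + (l - 1 / 2) = N + l + 1 / 2 by ring, ← hB, ← hD] at h
  have hb2 : c₀ * (N + m + 3 / 2) ^ (l - 1 / 2) * C ≤ A := by
    have h := hbound (N + m + 3 / 2) (by linarith)
    rwa [show N + m + 3 / 2 + (l - 1 / 2) = N + l + m + 1 by ring, ← hA, ← hC] at h
  clear_value N A B C D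
  have ha1 : a * N ^ (l - 1 / 2) ≤ (N + 1) ^ (l - 1 / 2) := by
    rw [ha]; exact rpow_min_le hN0 (by linarith) (by linarith)
  have ha2 : a * N ^ (l - 1 / 2) ≤ (N + m + 3 / 2) ^ (l - 1 / 2) := by
    rw [ha]; exact rpow_min_le hN0 (by linarith) (by linarith)
  have hNδ : (0:ℝ) ≤ N ^ (l - 1 / 2) := Real.rpow_nonneg hN0.le _
  have t1 : c₀ * (a * N ^ (l - 1 / 2)) * C ≤ A :=
    le_trans (mul_le_mul_of_nonneg_right
      (mul_le_mul_of_nonneg_left ha2 hc₀.le) hCpos.le) hb2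
  have t2 : c₀ * (a * N ^ (l - 1 / 2)) * D ≤ B :=
    le_trans (mul_le_mul_of_nonneg_right
      (mul_le_mul_of_nonneg_left ha1 hc₀.le) hDpos.le) hb1
  have hfac0 : (0:ℝ) ≤ c₀ * (a * N ^ (l - 1 / 2)) * D :=
    mul_nonneg (mul_nonneg hc₀.le (mul_nonneg ha0.le hNδ)) hDpos.le
  have main : (c₀ * (a * N ^ (l - 1 / 2)) * C) * (c₀ * (a * N ^ (l - 1 / 2)) * D) * N
      ≤ A * B * (2 * N + l + m + 1) := by
    have h3 : N ≤ 2 * N + l + m + 1 := by linarith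
    exact mul_le_mul (mul_le_mul t1 t2 hfac0 hApos.le) h3 hN0.le
      (mul_nonneg hApos.le hBpos.le)
  -- exponent algebra
  have eN : N ^ l * N ^ l = N ^ (l - 1 / 2) * N ^ (l - 1 / 2) * N := by
    have h1 : N ^ l * N ^ l = N ^ (l + l) := (Real.rpow_add hN0 l l).symm
    have h2 : N ^ (l - 1 / 2) * N ^ (l - 1 / 2) * N
        = N ^ ((l - 1 / 2) + (l - 1 / 2) + 1) := by
      rw [Real.rpow_add hN0, Real.rpow_add hN0, Real.rpow_one]
    rw [h1, h2]
    congr 1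
    ring
  -- value of the polynomial part
  have hJ : jacobiP (l - 1 / 2) (m + 1 / 2) n (2 * 1 ^ 2 - 1)
      = (Nat.factorial n : ℝ)⁻¹ * (B / Real.Gamma (l + 1 / 2)) := by
    rw [show (2 * (1:ℝ) ^ 2 - 1) = 1 by norm_num, jacobiP_at_one,
      show l - 1 / 2 + 1 = l + 1 / 2 by ring]
    have h := Gamma_add_nat' (l + 1 / 2) hl2 n
    rw [show l + 1 / 2 + (n:ℝ) = N + l + 1 / 2 by rw [hNdef]; ring, ← hB] at h
    rw [h, mul_div_cancel_right₀ _ hCl.ne']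
  have hDfac : D = (Nat.factorial n : ℝ) := by
    rw [hD, hNdef, Real.Gamma_nat_eq_factorial]
  have hfacpos : (0:ℝ) < (Nat.factorial n : ℝ) := by
    exact_mod_cast Nat.factorial_pos n
  -- the normalization constant
  have hatilde : atilde2n1 l m n
      = (((2 * N + l + m + 1) * D * A) / (B * C)) ^ ((1:ℝ)/2) := by
    rw [hA, hB, hC, hD, hNdef]
    simp only [atilde2n1]
  have hEpos : 0 < ((2 * N + l + m + 1) * D * A) / (B * C) :=
    div_pos (mul_pos (mul_pos hLpos hDpos) hApos) (mul_pos hBpos hCpos)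
  set E : ℝ := ((2 * N + l + m + 1) * D * A) / (B * C) with hE
  clear_value E
  set J : ℝ := (Nat.factorial n : ℝ)⁻¹ * (B / Real.Gamma (l + 1 / 2)) with hJdef
  have hJpos : 0 < J := by
    rw [hJdef]; exact mul_pos (inv_pos.mpr hfacpos) (div_pos hBpos hCl)
  clear_value J
  have hV : atilde2n1 l m n * 1 * jacobiP (l - 1 / 2) (m + 1 / 2) n (2 * 1 ^ 2 - 1)
      = E ^ ((1:ℝ)/2) * 1 * J := by rw [hatilde, hJ, hJdef]
  have hVpos : 0 < E ^ ((1:ℝ)/2) * 1 * J :=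
    mul_pos (mul_pos (Real.rpow_pos_of_pos hEpos _) one_pos) hJpos
  have hsq : (E ^ ((1:ℝ)/2)) ^ (2:ℕ) = E := by
    rw [← Real.rpow_natCast (E ^ ((1:ℝ)/2)) 2, ← Real.rpow_mul hEpos.le]
    norm_num
  have hEJ : E * J ^ (2:ℕ) = ((2 * N + l + m + 1) * A * B) /
      (C * D * Real.Gamma (l + 1 / 2) ^ (2:ℕ)) := by
    have hden1 : (B * C) * (Real.Gamma (l + 1 / 2) ^ (2:ℕ) * D ^ (2:ℕ)) ≠ 0 :=
      mul_ne_zero (mul_ne_zero hBpos.ne' hCpos.ne')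
        (mul_ne_zero (pow_ne_zero _ hCl.ne') (pow_ne_zero _ hDpos.ne'))
    have hden2 : (C * D * Real.Gamma (l + 1 / 2) ^ (2:ℕ)) ≠ 0 :=
      mul_ne_zero (mul_ne_zero hCpos.ne' hDpos.ne') (pow_ne_zero _ hCl.ne')
    rw [hE, hJdef, ← hDfac, mul_pow, inv_pow, div_pow, inv_mul_eq_div, div_div,
      div_mul_div_comm, div_eq_div_iff hden1 hden2]
    ring
  have hcN0 : 0 ≤ c * N ^ l := mul_nonneg hcpos.le (Real.rpow_nonneg hN0.le _)
  have hkey : (c * N ^ l) ^ (2:ℕ) ≤ (E ^ ((1:ℝ)/2) * 1 * J) ^ (2:ℕ) := by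
    have hden : (0:ℝ) < C * D * Real.Gamma (l + 1 / 2) ^ (2:ℕ) :=
      mul_pos (mul_pos hCpos hDpos) (pow_pos hCl 2)
    have hgoal : (c * N ^ l) ^ (2:ℕ) ≤ E * J ^ (2:ℕ) := by
      rw [hEJ, le_div_iff₀ hden]
      calc (c * N ^ l) ^ (2:ℕ) * (C * D * Real.Gamma (l + 1 / 2) ^ (2:ℕ))
          = c₀ ^ 2 * a ^ 2 * (N ^ l * N ^ l) * (C * D) := by
            rw [hc, div_mul_eq_mul_div, div_pow, div_mul_eq_mul_div,
              div_eq_iff (pow_ne_zero 2 hCl.ne')]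
            ring
        _ = (c₀ * (a * N ^ (l - 1 / 2)) * C) * (c₀ * (a * N ^ (l - 1 / 2)) * D) * N := by
            rw [eN]; ring
        _ ≤ A * B * (2 * N + l + m + 1) := main
        _ = (2 * N + l + m + 1) * A * B := by ring
    calc (c * N ^ l) ^ (2:ℕ) ≤ E * J ^ (2:ℕ) := hgoal
      _ = (E ^ ((1:ℝ)/2) * 1 * J) ^ (2:ℕ) := by
          rw [mul_one, mul_pow, hsq]
  have h1 : c * N ^ l ≤ atilde2n1 l m n * 1 * jacobiP (l - 1 / 2) (m + 1 / 2) n (2 * 1 ^ 2 - 1) := by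
    rw [hV]
    have h := Real.sqrt_le_sqrt hkey
    rwa [Real.sqrt_sq hcN0, Real.sqrt_sq hVpos.le] at h
  refine ⟨h1, ?_⟩
  -- sSup part
  have hcont : Continuous fun x : ℝ => jacobiP (l - 1 / 2) (m + 1 / 2) n x := by
    unfold jacobiP
    exact continuous_const.mul (continuous_finset_sum _ fun k _ =>
      continuous_const.mul (((continuous_id.sub continuous_const).div_const 2).pow k))
  have hF : Continuous fun t : ℝ =>
      |atilde2n1 l m n * t * jacobiP (l - 1 / 2) (m + 1 / 2) n (2 * t ^ 2 - 1)| := by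
    apply Continuous.abs
    exact (continuous_const.mul continuous_id).mul
      (hcont.comp ((continuous_const.mul (continuous_pow 2)).sub continuous_const))
  have hbdd : BddAbove ((fun t : ℝ =>
      |atilde2n1 l m n * t * jacobiP (l - 1 / 2) (m + 1 / 2) n (2 * t ^ 2 - 1)|) ''
      Set.Icc (-1) 1) := (isCompact_Icc.image hF).bddAbove
  have hmem : |atilde2n1 l m n * 1 * jacobiP (l - 1 / 2) (m + 1 / 2) n (2 * 1 ^ 2 - 1)| ∈
      ((fun t : ℝ =>
        |atilde2n1 l m n * t * jacobiP (l - 1 / 2) (m + 1 / 2) n (2 * t ^ 2 - 1)|) ''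
      Set.Icc (-1) 1) :=
    mem_image_of_mem _ (by norm_num : (1:ℝ) ∈ Set.Icc (-1:ℝ) 1)
  exact le_trans (h1.trans (le_abs_self _)) (le_csSup hbdd hmem)
end

section
/- Let λ > -1/2 and μ > 0. With C̃_{2n+1}^{(λ,μ)}(t) = ã_{2n+1}^{(λ,μ)} t P_n^{(λ-1/2, μ+1/2)}(2t² - 1), one has max_{t ∈ [-1,1]} |C̃_{2n+1}^{(λ,μ)}(t)| ≥ ã_{2n+1}^{(λ,μ)} sin(1/(2n)) |P_n^{(μ+1/2, λ-1/2)}(cos(1/n))| ≳ n^μ as n → ∞. -/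
open Real Set

namespace OGLB
open Finset Filter

lemma eval_eq_poch (q : ℝ) (k : ℕ) : (ascPochhammer ℝ k).eval q = poch q k := rfl

lemma poch_zero (q : ℝ) : poch q 0 = 1 := by simp [poch]

lemma poch_succ_right (q : ℝ) (n : ℕ) : poch q (n + 1) = poch q n * (q + n) := by
  simp [poch, ascPochhammer_succ_eval]

lemma poch_succ_left (q : ℝ) (n : ℕ) : poch q (n + 1) = q * poch (q + 1) n := by
  simp [poch, ascPochhammer_succ_left, Polynomial.eval_mul, Polynomial.eval_comp]

lemma poch_pos {q : ℝ} (h : 0 < q) (n : ℕ) : 0 < poch q n := ascPochhammer_pos n q h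

lemma poch_add (q : ℝ) (n m : ℕ) : poch q (n + m) = poch q n * poch (q + n) m := by
  have h := congrArg (Polynomial.eval q) (ascPochhammer_mul ℝ n m)
  simpa [poch, Polynomial.eval_mul, Polynomial.eval_comp] using h.symm

lemma poch_eq_prod (s : ℝ) (n : ℕ) : poch s n = ∏ j ∈ Finset.range n, (s + j) := by
  induction n with
  | zero => simp [poch_zero]
  | succ n ih => rw [poch_succ_right, ih, Finset.prod_range_succ]

lemma poch_nonneg {q : ℝ} (h : 0 ≤ q) (n : ℕ) : 0 ≤ poch q n := by
  induction n with
  | zero => simp [poch_zero]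
  | succ n ih =>
    rw [poch_succ_right]
    have : (0:ℝ) ≤ q + n := by positivity
    positivity

lemma poch_le_pow {q B : ℝ} (hq : 0 ≤ q) : ∀ K : ℕ, q + K ≤ B → poch q K ≤ B ^ K := by
  intro K
  induction K with
  | zero => intro _; simp [poch_zero]
  | succ K ih =>
    intro hB
    have hK : q + K ≤ B := by push_cast at hB ⊢; linarith
    rw [poch_succ_right, pow_succ]
    have hB0 : (0:ℝ) ≤ B := le_trans (by positivity) hB
    have hBK : (0:ℝ) ≤ B ^ K := by positivity
    apply mul_le_mul (ih hK) hK (by positivity) hBK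

lemma factorial_le_poch {a : ℝ} (ha : 0 ≤ a) : ∀ K : ℕ, (K.factorial : ℝ) ≤ poch (a+1) K := by
  intro K
  induction K with
  | zero => simp [poch_zero]
  | succ K ih =>
    rw [poch_succ_right, Nat.factorial_succ]
    push_cast
    have h1 : (K:ℝ) + 1 ≤ a + 1 + K := by linarith
    have h2 : (0:ℝ) ≤ (K.factorial : ℝ) := by positivity
    nlinarith [ih, h1, h2, Nat.one_le_iff_ne_zero.mpr K.factorial_ne_zero]

lemma fact_sq : ∀ K : ℕ, 4^K ≤ 4 * (K.factorial)^2 := by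
  intro K
  induction K with
  | zero => norm_num
  | succ K ih =>
    rcases Nat.eq_zero_or_pos K with h | h
    · subst h; norm_num
    · have h4 : 4 ≤ (K+1)^2 := by nlinarith
      calc 4^(K+1) = 4^K * 4 := by ring
        _ ≤ (4 * K.factorial^2) * (K+1)^2 := Nat.mul_le_mul ih h4
        _ = 4 * ((K+1).factorial)^2 := by rw [Nat.factorial_succ]; ring

lemma choose_le_pow_div (n K : ℕ) : (n.choose K : ℝ) ≤ (n:ℝ)^K / (K.factorial : ℝ) := by
  rw [le_div_iff₀ (by positivity : (0:ℝ) < (K.factorial : ℝ))]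
  have h := Nat.descFactorial_le_pow n K
  have h2 := Nat.descFactorial_eq_factorial_mul_choose n K
  have h3 : (n.choose K) * (K.factorial) ≤ n ^ K := by rw [mul_comm, ← h2]; exact h
  exact_mod_cast h3

lemma vandermonde : ∀ (M : ℕ) (A D : ℝ),
    ∑ i ∈ Finset.range (M+1),
      (-1:ℝ)^i * (M.choose i) * poch D i * poch (A + i) (M - i) = poch (A - D) M := by
  intro M
  induction M with
  | zero => intro A D; simp [poch_zero]
  | succ M ih =>
    intro A D
    rw [Finset.sum_range_succ']
    have hsplit : ∀ i ∈ Finset.range (M+1),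
        (-1:ℝ)^(i+1) * ((M+1).choose (i+1)) * poch D (i+1) * poch (A + ↑(i+1)) (M + 1 - (i+1))
        = (-D) * ((-1:ℝ)^i * (M.choose i) * poch (D+1) i * poch ((A+1) + i) (M - i))
          + (-1:ℝ)^(i+1) * (M.choose (i+1)) * poch D (i+1) * poch (A + ↑(i+1)) (M - i) := by
      intro i hi
      rw [Nat.choose_succ_succ]
      push_cast
      rw [poch_succ_left D i]
      simp only [Nat.succ_eq_add_one, Nat.add_sub_cancel, Nat.succ_sub_succ]
      push_cast
      ring
    rw [Finset.sum_congr rfl hsplit, Finset.sum_add_distrib, ← Finset.mul_sum]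
    rw [add_assoc]
    have h1 : (∑ i ∈ Finset.range (M+1),
        (-1:ℝ)^i * (M.choose i) * poch (D+1) i * poch ((A+1) + i) (M - i)) = poch (A - D) M := by
      rw [ih (A+1) (D+1)]
      norm_num
    rw [h1]
    -- second part plus f 0
    have h2 : (∑ i ∈ Finset.range (M+1),
          (-1:ℝ)^(i+1) * (M.choose (i+1)) * poch D (i+1) * poch (A + ↑(i+1)) (M - i))
        + (-1:ℝ)^0 * ((M+1).choose 0) * poch D 0 * poch (A + (0:ℕ)) (M + 1 - 0)
        = (A + M) * poch (A - D) M := by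
      have hrev : (∑ i ∈ Finset.range (M+1),
          (-1:ℝ)^(i+1) * (M.choose (i+1)) * poch D (i+1) * poch (A + ↑(i+1)) (M - i))
          + (-1:ℝ)^0 * ((M+1).choose 0) * poch D 0 * poch (A + (0:ℕ)) (M + 1 - 0)
          = ∑ i ∈ Finset.range (M+2),
            (-1:ℝ)^i * (M.choose i) * poch D i * poch (A + i) (M + 1 - i) := by
        rw [Finset.sum_range_succ' (fun i => (-1:ℝ)^i * (M.choose i) * poch D i * poch (A + i) (M + 1 - i)) (M+1)]
        congr 1
        · apply Finset.sum_congr rfl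
          intro i hi
          have : M + 1 - (i + 1) = M - i := by omega
          rw [this]
        · simp [poch_zero]
      rw [hrev, Finset.sum_range_succ]
      simp only [Nat.choose_succ_self, Nat.cast_zero, zero_mul, mul_zero, add_zero]
      have : ∀ i ∈ Finset.range (M+1),
          (-1:ℝ)^i * (M.choose i) * poch D i * poch (A + i) (M + 1 - i)
          = (A + M) * ((-1:ℝ)^i * (M.choose i) * poch D i * poch (A + i) (M - i)) := by
        intro i hi
        simp only [Finset.mem_range] at hi
        have hle : i ≤ M := by omega
        have : M + 1 - i = (M - i) + 1 := by omega
        rw [this, poch_succ_right]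
        have : A + (i:ℝ) + ((M - i : ℕ):ℝ) = A + M := by
          rw [Nat.cast_sub hle]; ring
        rw [this]; ring
      rw [Finset.sum_congr rfl this, ← Finset.mul_sum, ih A D]
    rw [h2, poch_succ_right]
    push_cast
    ring

lemma poch_neg (z : ℝ) : ∀ M : ℕ, poch (-z) M = (-1)^M * poch (z - M + 1) M := by
  intro M
  induction M with
  | zero => simp [poch_zero]
  | succ M ih =>
    rw [poch_succ_right, ih]
    have h1 : z - (↑(M+1):ℝ) + 1 = z - M := by push_cast; ring
    rw [h1, poch_succ_left]
    have h2 : z - (M:ℝ) + 1 = z - ↑M + 1 := rfl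
    push_cast
    ring

/-- The key symmetry `P_n^{(a,b)}(-x) = (-1)^n P_n^{(b,a)}(x)`. -/
lemma jacobiP_neg (a b : ℝ) (n : ℕ) (x : ℝ) :
    jacobiP a b n (-x) = (-1:ℝ)^n * jacobiP b a n x := by
  unfold jacobiP
  set y : ℝ := (x - 1) / 2 with hy
  set c : ℝ := (n:ℝ) + a + b + 1 with hc
  have hc' : (n:ℝ) + b + a + 1 = c := by rw [hc]; ring
  rw [hc']
  have hneg : ∀ k : ℕ, ((-x - 1) / 2) ^ k
      = (-1:ℝ)^k * (∑ j ∈ Finset.range (k+1), y^j * (1:ℝ)^(k-j) * (k.choose j : ℝ)) := by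
    intro k
    rw [← add_pow]
    have h : (-x - 1)/2 = -(y + 1) := by rw [hy]; ring
    rw [h, neg_pow]
  have main : (∑ k ∈ Finset.range (n + 1),
      (n.choose k : ℝ) * (ascPochhammer ℝ k).eval c *
        (ascPochhammer ℝ (n - k)).eval (a + (k : ℝ) + 1) * ((-x - 1) / 2) ^ k)
      = (-1:ℝ)^n * ∑ j ∈ Finset.range (n + 1),
          (n.choose j : ℝ) * (ascPochhammer ℝ j).eval c *
            (ascPochhammer ℝ (n - j)).eval (b + (j : ℝ) + 1) * y ^ j := by
    calc
      ∑ k ∈ Finset.range (n + 1),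
          (n.choose k : ℝ) * (ascPochhammer ℝ k).eval c *
            (ascPochhammer ℝ (n - k)).eval (a + (k : ℝ) + 1) * ((-x - 1) / 2) ^ k
        = ∑ k ∈ Finset.range (n + 1), ∑ j ∈ Finset.range (n + 1),
            ((n.choose k : ℝ) * poch c k * poch (a + (k:ℝ) + 1) (n - k) * (-1:ℝ)^k
              * (k.choose j : ℝ)) * y^j := by
          apply Finset.sum_congr rfl
          intro k hk
          simp only [Finset.mem_range] at hk
          have hvan : ∀ j ∈ Finset.range (n+1), j ∉ Finset.range (k+1) →
              ((n.choose k : ℝ) * poch c k * poch (a + (k:ℝ) + 1) (n - k) * (-1:ℝ)^k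
                * (k.choose j : ℝ)) * y^j = 0 := by
            intro j hj hj'
            simp only [Finset.mem_range, not_lt] at hj'
            rw [Nat.choose_eq_zero_of_lt (by omega : k < j)]
            simp
          rw [← Finset.sum_subset (Finset.range_subset_range.mpr (by omega : k+1 ≤ n+1)) hvan]
          rw [hneg k, Finset.mul_sum, Finset.mul_sum]
          apply Finset.sum_congr rfl
          intro j hj
          simp only [one_pow, poch]
          ring
      _ = ∑ j ∈ Finset.range (n + 1), ∑ k ∈ Finset.range (n + 1),
            ((n.choose k : ℝ) * poch c k * poch (a + (k:ℝ) + 1) (n - k) * (-1:ℝ)^k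
              * (k.choose j : ℝ)) * y^j := Finset.sum_comm
      _ = ∑ j ∈ Finset.range (n + 1),
            (-1:ℝ)^n * ((n.choose j : ℝ) * poch c j * poch (b + (j:ℝ) + 1) (n - j) * y^j) := by
          apply Finset.sum_congr rfl
          intro j hj
          simp only [Finset.mem_range] at hj
          have hjn : j ≤ n := by omega
          rw [Finset.range_eq_Ico,
            ← Finset.sum_Ico_consecutive _ (Nat.zero_le j) (by omega : j ≤ n+1)]
          have hzero : ∑ k ∈ Finset.Ico 0 j,
              ((n.choose k : ℝ) * poch c k * poch (a + (k:ℝ) + 1) (n - k) * (-1:ℝ)^k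
                * (k.choose j : ℝ)) * y^j = 0 := by
            apply Finset.sum_eq_zero
            intro k hk
            simp only [Finset.mem_Ico] at hk
            rw [Nat.choose_eq_zero_of_lt (by omega : k < j)]
            simp
          rw [hzero, zero_add, Finset.sum_Ico_eq_sum_range]
          have hlen : n + 1 - j = (n - j) + 1 := by omega
          rw [hlen]
          have key : ∀ i ∈ Finset.range ((n-j)+1),
              ((n.choose (j+i) : ℝ) * poch c (j+i) * poch (a + (↑(j+i):ℝ) + 1) (n - (j+i))
                * (-1:ℝ)^(j+i) * ((j+i).choose j : ℝ)) * y^j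
              = ((n.choose j : ℝ) * poch c j * (-1:ℝ)^j * y^j) *
                ((-1:ℝ)^i * (((n-j).choose i) : ℝ) * poch (c + j) i
                  * poch ((a + (j:ℝ) + 1) + i) ((n-j) - i)) := by
            intro i hi
            simp only [Finset.mem_range] at hi
            have hjin : j + i ≤ n := by omega
            have hch : (n.choose (j+i) : ℝ) * ((j+i).choose j : ℝ)
                = (n.choose j : ℝ) * (((n-j).choose i):ℝ) := by
              have h := Nat.choose_mul (n := n) (Nat.le_add_right j i)
              have h2 : j + i - j = i := by omega
              rw [h2] at h
              exact_mod_cast congrArg (Nat.cast : ℕ → ℝ) h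
            have hpoch : poch c (j+i) = poch c j * poch (c + j) i := poch_add c j i
            have harg : a + (↑(j+i):ℝ) + 1 = (a + (j:ℝ) + 1) + i := by push_cast; ring
            have hnk : n - (j+i) = (n-j) - i := by omega
            rw [hpoch, harg, hnk, pow_add]
            linear_combination (poch c j * poch (c + (j:ℝ)) i
              * poch (a + (j:ℝ) + 1 + (i:ℝ)) ((n-j) - i) * ((-1:ℝ)^j * (-1:ℝ)^i) * y^j) * hch
          rw [Finset.sum_congr rfl key, ← Finset.mul_sum,
            vandermonde (n-j) (a + (j:ℝ) + 1) (c + j)]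
          have hAD : a + (j:ℝ) + 1 - (c + j) = -((b:ℝ) + n) := by rw [hc]; ring
          rw [hAD, poch_neg]
          have hbm : b + (n:ℝ) - (↑(n-j):ℝ) + 1 = b + (j:ℝ) + 1 := by
            rw [Nat.cast_sub hjn]; ring
          rw [hbm]
          have hsgn : (-1:ℝ)^j * (-1:ℝ)^(n-j) = (-1:ℝ)^n := by
            rw [← pow_add]
            congr 1
            omega
          linear_combination ((n.choose j : ℝ) * poch c j * poch (b + (j:ℝ) + 1) (n - j) * y ^ j) * hsgn
      _ = (-1:ℝ)^n * ∑ j ∈ Finset.range (n + 1),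
            (n.choose j : ℝ) * (ascPochhammer ℝ j).eval c *
              (ascPochhammer ℝ (n - j)).eval (b + (j : ℝ) + 1) * y ^ j := by
          rw [Finset.mul_sum]
          apply Finset.sum_congr rfl
          intro j hj
          simp only [poch]
  rw [main]
  ring

lemma gamma_poch {x : ℝ} (hx : 0 < x) (n : ℕ) :
    Real.Gamma (x + n) = Real.Gamma x * poch x n := by
  induction n with
  | zero => simp [poch_zero]
  | succ n ih =>
    have hxn : x + (n:ℝ) ≠ 0 := by positivity
    have h : x + ((n+1 : ℕ):ℝ) = (x + n) + 1 := by push_cast; ring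
    rw [h, Real.Gamma_add_one hxn, ih, poch_succ_right]
    ring

lemma ratio_tendsto_pos {s : ℝ} (hs : 0 < s) :
    Tendsto (fun n : ℕ => Real.Gamma ((n:ℝ) + 1 + s) / ((n.factorial : ℝ) * (n:ℝ) ^ s))
      atTop (nhds 1) := by
  have hG : Real.Gamma s ≠ 0 := (Real.Gamma_pos_of_pos hs).ne'
  have h := (tendsto_const_nhds (x := Real.Gamma s) (f := atTop (α := ℕ))).div
    (Real.GammaSeq_tendsto_Gamma s) hG
  rw [div_self hG] at h
  apply h.congr
  intro n
  have h1 : Real.Gamma ((n:ℝ) + 1 + s) = Real.Gamma s * poch s (n+1) := by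
    have e : (n:ℝ) + 1 + s = s + ((n+1 : ℕ):ℝ) := by push_cast; ring
    rw [e, gamma_poch hs]
  show Real.Gamma s / Real.GammaSeq s n = _
  unfold Real.GammaSeq
  rw [div_div_eq_mul_div, h1, poch_eq_prod]
  ring

lemma ratio_step (s : ℝ)
    (h : Tendsto (fun n : ℕ => Real.Gamma ((n:ℝ) + 1 + (s+1)) / ((n.factorial : ℝ) * (n:ℝ) ^ (s+1)))
      atTop (nhds 1)) :
    Tendsto (fun n : ℕ => Real.Gamma ((n:ℝ) + 1 + s) / ((n.factorial : ℝ) * (n:ℝ) ^ s))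
      atTop (nhds 1) := by
  have hcast : Tendsto (fun n : ℕ => (n:ℝ)) atTop atTop := tendsto_natCast_atTop_atTop
  have hev : ∀ᶠ n : ℕ in atTop, |s| + 2 < (n:ℝ) := hcast.eventually_gt_atTop (|s| + 2)
  have h0 : Tendsto (fun n : ℕ => (1+s) / (n:ℝ)) atTop (nhds 0) :=
    tendsto_const_div_atTop_nhds_zero_nat (1+s)
  have hq' : Tendsto (fun n : ℕ => ((1:ℝ) + (1+s)/(n:ℝ))⁻¹) atTop (nhds 1) := by
    have := ((tendsto_const_nhds (x := (1:ℝ)) (f := atTop (α := ℕ))).add h0).inv₀ (by norm_num)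
    simpa using this
  have hq : Tendsto (fun n : ℕ => (n:ℝ) / ((n:ℝ) + 1 + s)) atTop (nhds 1) := by
    apply hq'.congr'
    filter_upwards [hev] with n hn
    have hn0 : (n:ℝ) ≠ 0 := by cases abs_cases s <;> nlinarith
    have hns : (n:ℝ) + 1 + s ≠ 0 := by cases abs_cases s <;> nlinarith
    have e1 : (1:ℝ) + (1+s)/(n:ℝ) = ((n:ℝ)+1+s)/(n:ℝ) := by
      field_simp
      ring
    rw [e1, inv_div]
  have hmul := h.mul hq
  rw [mul_one] at hmul
  apply hmul.congr'
  filter_upwards [hev] with n hn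
  have hn0 : (n:ℝ) ≠ 0 := by cases abs_cases s <;> nlinarith
  have hn0' : (0:ℝ) < (n:ℝ) := by cases abs_cases s <;> nlinarith
  have hns : (n:ℝ) + 1 + s ≠ 0 := by cases abs_cases s <;> nlinarith
  have hG : Real.Gamma ((n:ℝ) + 1 + (s+1)) = ((n:ℝ) + 1 + s) * Real.Gamma ((n:ℝ) + 1 + s) := by
    have e : (n:ℝ) + 1 + (s+1) = ((n:ℝ) + 1 + s) + 1 := by ring
    rw [e, Real.Gamma_add_one hns]
  have hr : (n:ℝ) ^ (s+1) = (n:ℝ) ^ s * n := by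
    rw [Real.rpow_add_one hn0]
  rw [hG, hr]
  have hfac : (n.factorial : ℝ) ≠ 0 := by positivity
  have hrs : (n:ℝ) ^ s ≠ 0 := by positivity
  field_simp

lemma ratio_tendsto (s : ℝ) :
    Tendsto (fun n : ℕ => Real.Gamma ((n:ℝ) + 1 + s) / ((n.factorial : ℝ) * (n:ℝ) ^ s))
      atTop (nhds 1) := by
  have key : ∀ N : ℕ, ∀ s : ℝ, -s < N + 1 → Tendsto
      (fun n : ℕ => Real.Gamma ((n:ℝ) + 1 + s) / ((n.factorial : ℝ) * (n:ℝ) ^ s))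
      atTop (nhds 1) := by
    intro N
    induction N with
    | zero =>
      intro s hs
      by_cases h : 0 < s
      · exact ratio_tendsto_pos h
      · exact ratio_step s (ratio_tendsto_pos (by push_cast at hs; linarith))
    | succ N ih =>
      intro s hs
      by_cases h : 0 < s
      · exact ratio_tendsto_pos h
      · exact ratio_step s (ih (s+1) (by push_cast at hs ⊢; linarith))
  obtain ⟨N, hN⟩ := exists_nat_gt (-s)
  exact key N s (by push_cast; linarith)

lemma gamma_ratio_bound (s : ℝ) : ∃ n₀ : ℕ, 0 < n₀ ∧ ∀ n : ℕ, n₀ ≤ n →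
    (1/2:ℝ) * (n.factorial : ℝ) * (n:ℝ)^s ≤ Real.Gamma ((n:ℝ) + 1 + s) ∧
    Real.Gamma ((n:ℝ) + 1 + s) ≤ 2 * (n.factorial : ℝ) * (n:ℝ)^s := by
  have h := ratio_tendsto s
  have h1 := h.eventually (eventually_ge_nhds (by norm_num : (1/2:ℝ) < 1))
  have h2 := h.eventually (eventually_le_nhds (by norm_num : (1:ℝ) < 2))
  obtain ⟨n₀, hn₀⟩ := ((h1.and h2).and (eventually_ge_atTop 1)).exists_forall_of_atTop
  refine ⟨max n₀ 1, by omega, fun n hn => ?_⟩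
  obtain ⟨⟨ha, hb⟩, hc⟩ := hn₀ n (le_trans (le_max_left _ _) hn)
  have hnn : 1 ≤ n := le_trans (le_max_right _ _) hn
  have hd : (0:ℝ) < (n.factorial : ℝ) * (n:ℝ)^s := by
    have : (0:ℝ) < (n:ℝ) := by exact_mod_cast hnn
    positivity
  constructor
  · rw [mul_assoc]
    exact (le_div_iff₀ hd).mp ha
  · rw [mul_assoc]
    exact (div_le_iff₀ hd).mp hb

/-- Lower bound for the Jacobi polynomial at `cos (1/n)` by 1/13 of its value-scale at 1. -/
lemma jacobi_lower (a b : ℝ) (ha : 0 ≤ a) (hab : -1 < a + b) (n : ℕ) (hn : 1 ≤ n)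
    (hnab : a + b + 1 ≤ (n:ℝ)) :
    (1/13) * poch (a+1) n / (n.factorial : ℝ) ≤ jacobiP a b n (Real.cos (1/(n:ℝ))) := by
  have hn0 : (0:ℝ) < (n:ℝ) := by exact_mod_cast hn
  set x : ℝ := Real.cos (1/(n:ℝ)) with hx
  set δ : ℝ := (1 - x)/2 with hδdef
  have hδ0 : 0 ≤ δ := by
    have := Real.cos_le_one (1/(n:ℝ))
    rw [hδdef]; linarith
  have hδ : δ ≤ 1/(4*(n:ℝ)^2) := by
    have h := Real.one_sub_sq_div_two_le_cos (x := 1/(n:ℝ))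
    rw [hδdef, hx]
    have h2 : (1/(n:ℝ))^2 = 1/(n:ℝ)^2 := by rw [div_pow]; norm_num
    rw [h2] at h
    have : 1 - Real.cos (1/(n:ℝ)) ≤ 1/(n:ℝ)^2/2 := by linarith
    calc (1 - Real.cos (1/(n:ℝ)))/2 ≤ (1/(n:ℝ)^2/2)/2 := by linarith
      _ = 1/(4*(n:ℝ)^2) := by ring
  have hxd : (x - 1)/2 = -δ := by rw [hδdef]; ring
  set c : ℝ := (n:ℝ) + a + b + 1 with hc
  have hc0 : 0 < c := by rw [hc]; linarith
  unfold jacobiP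
  simp only [eval_eq_poch, hxd]
  set P : ℝ := poch (a+1) n with hP
  have hP0 : 0 ≤ P := by rw [hP]; exact poch_nonneg (by linarith) n
  -- the k = 0 term
  have hT0 : (n.choose 0 : ℝ) * poch c 0 * poch (a + ((0:ℕ):ℝ) + 1) (n - 0) * (-δ)^0 = P := by
    simp [poch_zero, hP]
  -- per-term bound for k+1
  have hterm : ∀ k ∈ Finset.range n,
      |(n.choose (k+1) : ℝ) * poch c (k+1) * poch (a + ((k+1:ℕ):ℝ) + 1) (n - (k+1)) * (-δ)^(k+1)|
        ≤ 4 * (3/16)^(k+1) * P := by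
    intro k hk
    simp only [Finset.mem_range] at hk
    set K := k + 1 with hK
    have hKn : K ≤ n := by omega
    have habs : |(n.choose K : ℝ) * poch c K * poch (a + (K:ℝ) + 1) (n - K) * (-δ)^K|
        = (n.choose K : ℝ) * poch c K * poch (a + (K:ℝ) + 1) (n - K) * δ^K := by
      rw [abs_mul, abs_mul, abs_mul]
      rw [abs_of_nonneg (by positivity : (0:ℝ) ≤ (n.choose K : ℝ)),
        abs_of_nonneg (poch_nonneg hc0.le K),
        abs_of_nonneg (poch_nonneg (by positivity : (0:ℝ) ≤ a + (K:ℝ) + 1) (n - K)),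
        abs_pow, abs_neg, abs_of_nonneg hδ0]
    rw [habs]
    have hKr : (K:ℝ) ≤ (n:ℝ) := by exact_mod_cast hKn
    have e : K + (n - K) = n := by omega
    have hsplit := poch_add (a+1) K (n - K)
    rw [e] at hsplit
    have h1 : (n.choose K : ℝ) ≤ (n:ℝ)^K / (K.factorial : ℝ) := choose_le_pow_div n K
    have h2 : poch c K ≤ (3*(n:ℝ))^K := by
      apply poch_le_pow hc0.le K
      rw [hc]
      linarith
    have h3 : δ^K ≤ (1/(4*(n:ℝ)^2))^K := pow_le_pow_left₀ hδ0 hδ K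
    have h4 : (K.factorial : ℝ) ≤ poch (a+1) K := factorial_le_poch ha K
    have h5 : (4:ℝ)^K ≤ 4 * (K.factorial : ℝ)^2 := by exact_mod_cast fact_sq K
    have key1 : (n.choose K:ℝ) * poch c K * δ^K
        ≤ ((n:ℝ)^K / (K.factorial : ℝ)) * (3*(n:ℝ))^K * (1/(4*(n:ℝ)^2))^K := by
      apply mul_le_mul (mul_le_mul h1 h2 (poch_nonneg hc0.le K) (by positivity)) h3
        (by positivity) (by positivity)
    have key2 : ((n:ℝ)^K / (K.factorial : ℝ)) * (3*(n:ℝ))^K * (1/(4*(n:ℝ)^2))^K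
        = (3/4:ℝ)^K / (K.factorial : ℝ) := by
      have hf : (K.factorial : ℝ) ≠ 0 := by positivity
      field_simp
      rw [← mul_pow (n:ℝ) (3 * n) K, ← mul_pow ((n:ℝ) * (3 * n)) (1 / ((n:ℝ)^2 * 4)) K, show (n:ℝ) * (3 * n) * (1 / ((n:ℝ)^2 * 4)) = 3/4 by
        rw [one_div, ← div_eq_mul_inv, div_eq_iff (by positivity)]; ring]
    have key3 : (3/4:ℝ)^K / (K.factorial : ℝ) ≤ 4 * (3/16:ℝ)^K * (K.factorial : ℝ) := by
      rw [div_le_iff₀ (by positivity : (0:ℝ) < (K.factorial : ℝ))]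
      have e2 : (3/4:ℝ)^K = (3/16:ℝ)^K * 4^K := by rw [← mul_pow]; norm_num
      rw [e2]
      calc (3/16:ℝ)^K * 4^K ≤ (3/16:ℝ)^K * (4 * (K.factorial : ℝ)^2) :=
            mul_le_mul_of_nonneg_left h5 (by positivity)
        _ = 4 * (3/16:ℝ)^K * (K.factorial : ℝ) * (K.factorial : ℝ) := by ring
    have key4 : (n.choose K:ℝ) * poch c K * δ^K ≤ 4 * (3/16:ℝ)^K * poch (a+1) K := by
      calc (n.choose K:ℝ) * poch c K * δ^K
          ≤ ((n:ℝ)^K / (K.factorial : ℝ)) * (3*(n:ℝ))^K * (1/(4*(n:ℝ)^2))^K := key1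
        _ = (3/4:ℝ)^K / (K.factorial : ℝ) := key2
        _ ≤ 4 * (3/16:ℝ)^K * (K.factorial : ℝ) := key3
        _ ≤ 4 * (3/16:ℝ)^K * poch (a+1) K := mul_le_mul_of_nonneg_left h4 (by positivity)
    have harg : a + (K:ℝ) + 1 = a + 1 + (K:ℝ) := by ring
    rw [harg]
    calc (n.choose K : ℝ) * poch c K * poch (a + 1 + (K:ℝ)) (n - K) * δ^K
        = ((n.choose K:ℝ) * poch c K * δ^K) * poch (a + 1 + (K:ℝ)) (n - K) := by ring
      _ ≤ (4 * (3/16:ℝ)^K * poch (a+1) K) * poch (a + 1 + (K:ℝ)) (n - K) :=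
          mul_le_mul_of_nonneg_right key4 (poch_nonneg (by positivity) _)
      _ = 4 * (3/16:ℝ)^K * P := by rw [hP, hsplit]; ring
  -- assemble
  rw [Finset.sum_range_succ', hT0]
  have hgeom : ∑ k ∈ Finset.range n, (3/16:ℝ)^k ≤ 16/13 := by
    rw [geom_sum_eq (by norm_num : (3/16:ℝ) ≠ 1)]
    rw [div_le_iff_of_neg (by norm_num : (3/16:ℝ) - 1 < 0)]
    have := pow_nonneg (by norm_num : (0:ℝ) ≤ 3/16) n
    linarith
  have habs2 : |∑ k ∈ Finset.range n,
      (n.choose (k+1) : ℝ) * poch c (k+1) * poch (a + ((k+1:ℕ):ℝ) + 1) (n - (k+1)) * (-δ)^(k+1)|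
      ≤ (12/13) * P := by
    calc |∑ k ∈ Finset.range n,
        (n.choose (k+1) : ℝ) * poch c (k+1) * poch (a + ((k+1:ℕ):ℝ) + 1) (n - (k+1)) * (-δ)^(k+1)|
        ≤ ∑ k ∈ Finset.range n,
          |(n.choose (k+1) : ℝ) * poch c (k+1) * poch (a + ((k+1:ℕ):ℝ) + 1) (n - (k+1)) * (-δ)^(k+1)| :=
          Finset.abs_sum_le_sum_abs _ _
      _ ≤ ∑ k ∈ Finset.range n, 4 * (3/16:ℝ)^(k+1) * P := Finset.sum_le_sum hterm
      _ = (∑ k ∈ Finset.range n, (3/16:ℝ)^k) * ((3/4) * P) := by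
          rw [Finset.sum_mul]
          apply Finset.sum_congr rfl
          intro k _
          rw [pow_succ]
          ring
      _ ≤ (16/13) * ((3/4) * P) := by
          apply mul_le_mul_of_nonneg_right hgeom (by positivity)
      _ = (12/13) * P := by ring
  have hrest := neg_abs_le (∑ k ∈ Finset.range n,
      (n.choose (k+1) : ℝ) * poch c (k+1) * poch (a + ((k+1:ℕ):ℝ) + 1) (n - (k+1)) * (-δ)^(k+1))
  have hfin : (1/13) * P ≤ (∑ k ∈ Finset.range n,
      (n.choose (k+1) : ℝ) * poch c (k+1) * poch (a + ((k+1:ℕ):ℝ) + 1) (n - (k+1)) * (-δ)^(k+1)) + P := by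
    linarith
  calc (1/13) * P / (n.factorial : ℝ) = (n.factorial : ℝ)⁻¹ * ((1/13) * P) := by ring
    _ ≤ (n.factorial : ℝ)⁻¹ * ((∑ k ∈ Finset.range n,
        (n.choose (k+1) : ℝ) * poch c (k+1) * poch (a + ((k+1:ℕ):ℝ) + 1) (n - (k+1)) * (-δ)^(k+1)) + P) :=
        mul_le_mul_of_nonneg_left hfin (by positivity)

lemma sin_lower (n : ℕ) (hn : 1 ≤ n) : 3/(8*(n:ℝ)) ≤ Real.sin (1/(2*(n:ℝ))) := by
  have hn0 : (0:ℝ) < (n:ℝ) := by exact_mod_cast hn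
  have hx0 : (0:ℝ) < 1/(2*(n:ℝ)) := by positivity
  have hn1 : (1:ℝ) ≤ (n:ℝ) := by exact_mod_cast hn
  have hx1 : 1/(2*(n:ℝ)) ≤ 1 := by
    rw [div_le_one (by positivity)]
    linarith
  have h := Real.sin_gt_sub_cube hx0
  have ht2 : (1/(2*(n:ℝ)))^2 ≤ 1 := by nlinarith
  have ht3 : (1/(2*(n:ℝ)))^3 ≤ 1/(2*(n:ℝ)) := by
    nlinarith
  have he : 3/(8*(n:ℝ)) = (3/4) * (1/(2*(n:ℝ))) := by ring
  rw [he]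
  nlinarith

lemma atilde_lower (l m : ℝ) (hl : -(1/2:ℝ) < l) (hm : 0 < m) :
    ∃ n₀ : ℕ, 0 < n₀ ∧ ∀ n : ℕ, n₀ ≤ n → (n:ℝ)^((1:ℝ)/2)/2 ≤ atilde2n1 l m n := by
  obtain ⟨na, hna0, hna⟩ := gamma_ratio_bound (l+m)
  obtain ⟨nb, hnb0, hnb⟩ := gamma_ratio_bound (l-1/2)
  obtain ⟨nc, hnc0, hnc⟩ := gamma_ratio_bound (m+1/2)
  refine ⟨max (max na nb) (max nc 1), by omega, fun n hn => ?_⟩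
  have hn1 : 1 ≤ n := by omega
  have hn0 : (0:ℝ) < (n:ℝ) := by exact_mod_cast hn1
  have hF0 : (0:ℝ) < (n.factorial : ℝ) := by positivity
  obtain ⟨hga, -⟩ := hna n (by omega)
  obtain ⟨-, hgb⟩ := hnb n (by omega)
  obtain ⟨-, hgc⟩ := hnc n (by omega)
  have hgb0 : 0 < Real.Gamma ((n:ℝ)+1+(l-1/2)) := Real.Gamma_pos_of_pos (by linarith)
  have hgc0 : 0 < Real.Gamma ((n:ℝ)+1+(m+1/2)) := Real.Gamma_pos_of_pos (by linarith)
  have hga0 : 0 < Real.Gamma ((n:ℝ)+1+(l+m)) := Real.Gamma_pos_of_pos (by linarith)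
  unfold atilde2n1
  have e1 : (n:ℝ) + l + m + 1 = (n:ℝ)+1+(l+m) := by ring
  have e2 : (n:ℝ) + l + 1/2 = (n:ℝ)+1+(l-1/2) := by ring
  have e3 : (n:ℝ) + m + 3/2 = (n:ℝ)+1+(m+1/2) := by ring
  rw [e1, e2, e3, Real.Gamma_nat_eq_factorial]
  set F : ℝ := (n.factorial : ℝ) with hF
  set G1 : ℝ := Real.Gamma ((n:ℝ)+1+(l+m))
  set G2 : ℝ := Real.Gamma ((n:ℝ)+1+(l-1/2))
  set G3 : ℝ := Real.Gamma ((n:ℝ)+1+(m+1/2))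
  have hnum : (n:ℝ) * F^2 * (n:ℝ)^(l+m) ≤ (2*(n:ℝ)+l+m+1) * F * G1 := by
    have s1 : (n:ℝ) * F^2 * (n:ℝ)^(l+m) = (2*(n:ℝ)) * F * ((1/2) * F * (n:ℝ)^(l+m)) := by ring
    rw [s1]
    have s2 : (2*(n:ℝ)) * F * ((1/2) * F * (n:ℝ)^(l+m)) ≤ (2*(n:ℝ)) * F * G1 :=
      mul_le_mul_of_nonneg_left hga (by positivity)
    have s3 : (2*(n:ℝ)) * F * G1 ≤ (2*(n:ℝ)+l+m+1) * F * G1 := by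
      have hle : (2*(n:ℝ)) ≤ 2*(n:ℝ)+l+m+1 := by linarith
      have h4 : (0:ℝ) ≤ F * G1 := by positivity
      calc (2*(n:ℝ)) * F * G1 = (2*(n:ℝ)) * (F * G1) := by ring
        _ ≤ (2*(n:ℝ)+l+m+1) * (F * G1) := mul_le_mul_of_nonneg_right hle h4
        _ = (2*(n:ℝ)+l+m+1) * F * G1 := by ring
    linarith
  have hden : G2 * G3 ≤ (2*F*(n:ℝ)^(l-1/2)) * (2*F*(n:ℝ)^(m+1/2)) :=
    mul_le_mul hgb hgc hgc0.le (by positivity)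
  have hQ : (n:ℝ)/4 ≤ (2*(n:ℝ)+l+m+1) * F * G1 / (G2 * G3) := by
    have hr : (n:ℝ)^(l-1/2) * (n:ℝ)^(m+1/2) = (n:ℝ)^(l+m) := by
      rw [← Real.rpow_add hn0]
      congr 1
      ring
    have hAB : (n:ℝ) * F^2 * (n:ℝ)^(l+m) / ((2*F*(n:ℝ)^(l-1/2)) * (2*F*(n:ℝ)^(m+1/2)))
        = (n:ℝ)/4 := by
      have h1 : (2*F*(n:ℝ)^(l-1/2)) * (2*F*(n:ℝ)^(m+1/2)) = 4*F^2*(n:ℝ)^(l+m) := by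
        rw [show (2*F*(n:ℝ)^(l-1/2)) * (2*F*(n:ℝ)^(m+1/2))
            = 4*F^2*((n:ℝ)^(l-1/2) * (n:ℝ)^(m+1/2)) from by ring, hr]
      rw [h1]
      have h2 : (n:ℝ)^(l+m) ≠ 0 := (Real.rpow_pos_of_pos hn0 _).ne'
      field_simp
    rw [← hAB]
    have hnum0 : (0:ℝ) ≤ (2*(n:ℝ)+l+m+1) * F * G1 := by
      have hp : (0:ℝ) < 2*(n:ℝ)+l+m+1 := by linarith
      positivity
    apply div_le_div₀ hnum0 hnum (by positivity) hden
  calc (n:ℝ)^((1:ℝ)/2)/2 = ((n:ℝ)/4)^((1:ℝ)/2) := by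
        rw [Real.div_rpow hn0.le (by norm_num : (0:ℝ) ≤ 4)]
        congr 1
        rw [show (4:ℝ) = 2^(2:ℕ) from by norm_num, ← Real.rpow_natCast 2 2,
          ← Real.rpow_mul (by norm_num : (0:ℝ) ≤ 2)]
        norm_num
    _ ≤ ((2*(n:ℝ)+l+m+1) * F * G1 / (G2 * G3)) ^ ((1:ℝ)/2) :=
        Real.rpow_le_rpow (by positivity) hQ (by norm_num)

lemma poch_div_fact_lower (a : ℝ) (ha : 0 < a) :
    ∃ n₀ : ℕ, 0 < n₀ ∧ ∀ n : ℕ, n₀ ≤ n →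
      (n:ℝ)^a / (2 * Real.Gamma (a+1)) ≤ poch (a+1) n / (n.factorial : ℝ) := by
  obtain ⟨n₀, hn₀0, hb⟩ := gamma_ratio_bound a
  refine ⟨max n₀ 1, by omega, fun n hn => ?_⟩
  have hn1 : 1 ≤ n := by omega
  have hn0 : (0:ℝ) < (n:ℝ) := by exact_mod_cast hn1
  have hF0 : (0:ℝ) < (n.factorial : ℝ) := by positivity
  have hG0 : 0 < Real.Gamma (a+1) := Real.Gamma_pos_of_pos (by linarith)
  obtain ⟨h1, -⟩ := hb n (by omega)
  have hgp : Real.Gamma ((n:ℝ)+1+a) = Real.Gamma (a+1) * poch (a+1) n := by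
    have e : (n:ℝ)+1+a = (a+1) + (n:ℕ) := by push_cast; ring
    rw [e, gamma_poch (by linarith : (0:ℝ) < a+1)]
  rw [hgp] at h1
  rw [div_le_div_iff₀ (by positivity) hF0]
  calc (n:ℝ)^a * (n.factorial : ℝ) = 2 * ((1/2) * (n.factorial : ℝ) * (n:ℝ)^a) := by ring
    _ ≤ 2 * (Real.Gamma (a+1) * poch (a+1) n) := by linarith
    _ = poch (a+1) n * (2 * Real.Gamma (a+1)) := by ring

end OGLB

theorem odd_gegenbauer_lower_bound_n_mu (l m : ℝ) (hl : -(1 / 2 : ℝ) < l) (hm : 0 < m) :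
    ∃ c : ℝ, 0 < c ∧ ∃ n₀ : ℕ, ∀ n : ℕ, n₀ ≤ n →
      atilde2n1 l m n * Real.sin (1 / (2 * n)) *
          |jacobiP (m + 1 / 2) (l - 1 / 2) n (Real.cos (1 / n))| ≤
        sSup ((fun t : ℝ =>
            |atilde2n1 l m n * t * jacobiP (l - 1 / 2) (m + 1 / 2) n (2 * t ^ 2 - 1)|) ''
          Set.Icc (-1) 1) ∧
      c * (n : ℝ) ^ m ≤
        atilde2n1 l m n * Real.sin (1 / (2 * n)) *
          |jacobiP (m + 1 / 2) (l - 1 / 2) n (Real.cos (1 / n))| := by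
  classical
  set a : ℝ := m + 1/2 with ha
  set b : ℝ := l - 1/2 with hb
  obtain ⟨nA, hnA0, hA⟩ := OGLB.atilde_lower l m hl hm
  obtain ⟨nP, hnP0, hP⟩ := OGLB.poch_div_fact_lower a (by rw [ha]; linarith)
  obtain ⟨nB, hnB⟩ := exists_nat_gt (a + b + 1)
  set G : ℝ := Real.Gamma (a + 1) with hG
  have hG0 : 0 < G := Real.Gamma_pos_of_pos (by rw [ha]; linarith)
  refine ⟨3 / (416 * G), by positivity, max (max nA nP) (max nB 1), fun n hn => ?_⟩
  have hn1 : 1 ≤ n := by omega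
  have hn0 : (0:ℝ) < (n:ℝ) := by exact_mod_cast hn1
  have hnB' : a + b + 1 ≤ (n:ℝ) := by
    have hc : (nB : ℝ) ≤ (n:ℝ) := by exact_mod_cast (by omega : nB ≤ n)
    linarith
  have hab : -1 < a + b := by rw [ha, hb]; linarith
  have hJ1 : (1/13) * poch (a+1) n / (n.factorial : ℝ) ≤ jacobiP a b n (Real.cos (1/(n:ℝ))) :=
    OGLB.jacobi_lower a b (by rw [ha]; linarith) hab n hn1 hnB'
  have hP' := hP n (by omega)
  have hJlb : (1/13) * ((n:ℝ)^a / (2 * G)) ≤ jacobiP a b n (Real.cos (1/(n:ℝ))) := by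
    calc (1/13) * ((n:ℝ)^a / (2 * G))
        ≤ (1/13) * (poch (a+1) n / (n.factorial : ℝ)) :=
          mul_le_mul_of_nonneg_left hP' (by norm_num)
      _ = (1/13) * poch (a+1) n / (n.factorial : ℝ) := by ring
      _ ≤ jacobiP a b n (Real.cos (1/(n:ℝ))) := hJ1
  have hJ0 : 0 ≤ jacobiP a b n (Real.cos (1/(n:ℝ))) := by
    have hpos : (0:ℝ) ≤ (1/13) * ((n:ℝ)^a / (2 * G)) := by positivity
    linarith
  have hJabs : (1/13) * ((n:ℝ)^a / (2 * G)) ≤ |jacobiP a b n (Real.cos (1/(n:ℝ)))| := by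
    rw [abs_of_nonneg hJ0]
    exact hJlb
  have hS := OGLB.sin_lower n hn1
  have hS0 : 0 ≤ Real.sin (1/(2*(n:ℝ))) := by
    have hpos : (0:ℝ) < 3/(8*(n:ℝ)) := by positivity
    linarith
  have hA' := hA n (by omega)
  have hA0 : 0 ≤ atilde2n1 l m n := by
    have hpos : (0:ℝ) ≤ (n:ℝ)^((1:ℝ)/2)/2 := by positivity
    linarith
  constructor
  · -- sSup part
    set f : ℝ → ℝ := fun t =>
      |atilde2n1 l m n * t * jacobiP b a n (2 * t ^ 2 - 1)| with hf
    have hcont : Continuous f := by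
      apply Continuous.abs
      apply Continuous.mul
      · exact continuous_const.mul continuous_id
      · unfold jacobiP
        apply continuous_const.mul
        apply continuous_finset_sum
        intro k _
        fun_prop
    have hbdd : BddAbove (f '' Set.Icc (-1) 1) :=
      (isCompact_Icc.image hcont).bddAbove
    set t₀ : ℝ := Real.sin (1/(2*(n:ℝ))) with ht₀
    have ht₀mem : t₀ ∈ Set.Icc (-1:ℝ) 1 := ⟨Real.neg_one_le_sin _, Real.sin_le_one _⟩
    have harg : 2 * t₀^2 - 1 = -(Real.cos (1/(n:ℝ))) := by
      have h2x : (1:ℝ)/(n:ℝ) = 2 * (1/(2*(n:ℝ))) := by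
        field_simp
      rw [h2x, Real.cos_two_mul]
      have hpyt := Real.sin_sq_add_cos_sq (1/(2*(n:ℝ)))
      rw [ht₀]
      nlinarith [hpyt]
    have hsym : jacobiP b a n (2 * t₀^2 - 1)
        = (-1:ℝ)^n * jacobiP a b n (Real.cos (1/(n:ℝ))) := by
      rw [harg]
      exact OGLB.jacobiP_neg b a n (Real.cos (1/(n:ℝ)))
    have hval : f t₀ = atilde2n1 l m n * Real.sin (1/(2*(n:ℝ))) *
        |jacobiP a b n (Real.cos (1/(n:ℝ)))| := by
      rw [hf]
      simp only
      rw [hsym, abs_mul, abs_mul, abs_of_nonneg hA0, abs_of_nonneg hS0,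
        abs_mul, abs_pow, abs_neg, abs_one, one_pow, one_mul]
    have hle : f t₀ ≤ sSup (f '' Set.Icc (-1) 1) :=
      le_csSup hbdd ⟨t₀, ht₀mem, rfl⟩
    rw [hval] at hle
    exact hle
  · -- growth part
    have step1 : ((n:ℝ)^((1:ℝ)/2)/2) * (3/(8*(n:ℝ))) * ((1/13) * ((n:ℝ)^a / (2 * G)))
        ≤ atilde2n1 l m n * Real.sin (1/(2*(n:ℝ))) * |jacobiP a b n (Real.cos (1/(n:ℝ)))| := by
      apply mul_le_mul
      · apply mul_le_mul hA' hS (by positivity) hA0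
      · exact hJabs
      · positivity
      · positivity
    have step2 : ((n:ℝ)^((1:ℝ)/2)/2) * (3/(8*(n:ℝ))) * ((1/13) * ((n:ℝ)^a / (2 * G)))
        = (3 / (416 * G)) * (n:ℝ)^m := by
      have hr1 : (n:ℝ)^((1:ℝ)/2) * (n:ℝ)^a = (n:ℝ)^m * (n:ℝ) := by
        rw [← Real.rpow_add hn0]
        have e : (1:ℝ)/2 + a = m + 1 := by rw [ha]; ring
        rw [e, Real.rpow_add hn0, Real.rpow_one]
      have hn' : (n:ℝ) ≠ 0 := hn0.ne'
      calc ((n:ℝ)^((1:ℝ)/2)/2) * (3/(8*(n:ℝ))) * ((1/13) * ((n:ℝ)^a / (2 * G)))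
          = (3 / (416 * G)) * (((n:ℝ)^((1:ℝ)/2) * (n:ℝ)^a)/(n:ℝ)) := by ring
        _ = (3 / (416 * G)) * (((n:ℝ)^m * (n:ℝ))/(n:ℝ)) := by rw [hr1]
        _ = (3 / (416 * G)) * (n:ℝ)^m := by
            rw [mul_div_assoc, div_self hn', mul_one]
    rw [← step2]
    exact step1
end
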